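/- arXiv:1710.02466 — 6 statements merged into one kernel-verified Lean document; each statement's English description precedes it below -/
import Mathlib

section
/- There exists ζ > 0 such that for every integer N ≥ 8, P[there exists k ≥ 1 with S_k = N] ≥ ζ. -/
open MeasureTheory ProbabilityTheory

/-- Uniform lower bound on renewal probabilities:
there is `ζ > 0` such that `P[∃ k ≥ 1, S_k = N] ≥ ζ` for every `N ≥ 8`. -/
theorem renewal_uniform_lower_bound
    {Ω : Type*} [MeasurableSpace Ω] (P : Measure Ω) [IsProbabilityMeasure P]
    (q : ℕ → ℝ) (hq0 : ∀ n, 0 ≤ q n) (hq1 : HasSum q 1)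
    (hqlow : ∀ n < 8, q n = 0) (hqpos : ∀ n, 8 ≤ n → 0 < q n)
    (c ω : ℝ) (hc : 0 < c) (hω : 0 < ω)
    (hqexp : ∀ n : ℕ, q n ≤ c * Real.exp (-ω * n))
    (u : ℕ → Ω → ℕ) (hmeas : ∀ i, Measurable (u i))
    (hindep : iIndepFun u P)
    (hlaw : ∀ i n, P {x | u i x = n} = ENNReal.ofReal (q n)) :
    ∃ ζ > (0 : ℝ), ∀ N : ℕ, 8 ≤ N →
      ζ ≤ (P {x | ∃ k, 1 ≤ k ∧ (∑ i ∈ Finset.range k, u i x) = N}).toReal := by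
  classical
  -- the geometric ratio
  set r : ℝ := Real.exp (-ω) with hrdef
  have hr0 : 0 < r := Real.exp_pos _
  have hr1 : r < 1 := Real.exp_lt_one_iff.mpr (by linarith)
  have h1r : 0 < 1 - r := by linarith
  -- choose J with c * r ^ J ≤ (1-r)^2 / 2
  obtain ⟨J, hJ⟩ : ∃ J : ℕ, c * r ^ J ≤ (1 - r) ^ 2 / 2 := by
    obtain ⟨n, hn⟩ := exists_pow_lt_of_lt_one (x := (1 - r) ^ 2 / 2 / c)
      (by positivity) hr1
    exact ⟨n, by rw [mul_comm]; exact ((lt_div_iff₀ hc).mp hn).le⟩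
  -- partial sums
  set S : ℕ → Ω → ℕ := fun k x => ∑ i ∈ Finset.range k, u i x with hSdef
  have hSm : ∀ k, Measurable (S k) := fun k => Finset.measurable_sum _ fun i _ => hmeas i
  have hSsucc : ∀ k x, S (k + 1) x = S k x + u k x := fun k x => Finset.sum_range_succ _ _
  have hAm : ∀ k s, MeasurableSet {x | S k x = s} := fun k s =>
    (hSm k) (measurableSet_singleton s)
  -- the good (full measure) event
  set G : Set Ω := {x | ∀ i, 8 ≤ u i x} with hGdef
  have hGm : MeasurableSet G := by
    have hGeq : G = ⋂ i, u i ⁻¹' (Set.Ici 8) := by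
      ext x; simp [hGdef, Set.mem_iInter, Set.mem_Ici]
    rw [hGeq]
    exact MeasurableSet.iInter fun i => (hmeas i) (Set.to_countable _).measurableSet
  have hGc : P Gᶜ = 0 := by
    have hsub : Gᶜ ⊆ ⋃ i, ⋃ n : Fin 8, {x | u i x = (n : ℕ)} := by
      intro x hx
      simp only [hGdef, Set.mem_compl_iff, Set.mem_setOf_eq, not_forall, not_le] at hx
      obtain ⟨i, hi⟩ := hx
      exact Set.mem_iUnion.mpr ⟨i, Set.mem_iUnion.mpr ⟨⟨u i x, hi⟩, rfl⟩⟩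
    refine measure_mono_null hsub (measure_iUnion_null fun i => measure_iUnion_null fun n => ?_)
    rw [hlaw i n, hqlow n n.isLt, ENNReal.ofReal_zero]
  have hG1 : 1 ≤ P G := by
    have hle := measure_union_le (μ := P) G Gᶜ
    rwa [Set.union_compl_self, measure_univ, hGc, add_zero] at hle
  -- on G the walk is strictly monotone and grows linearly
  have hmono : ∀ x ∈ G, StrictMono fun k => S k x := by
    intro x hx
    apply strictMono_nat_of_lt_succ
    intro k
    have h8 := hx k
    simp only [hSsucc]
    omega
  have hgrow : ∀ x ∈ G, ∀ k, 8 * k ≤ S k x := by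
    intro x hx k
    induction k with
    | zero => simp
    | succ k ih => have h8 := hx k; rw [hSsucc]; omega
  -- independence of S k and u k
  have hind : ∀ (k s : ℕ) (t : Set ℕ),
      P ({x | S k x = s} ∩ u k ⁻¹' t) = P {x | S k x = s} * P (u k ⁻¹' t) := by
    intro k s t
    have h := (hindep.indepFun_sum_range_succ hmeas k).measure_inter_preimage_eq_mul
      (s := {s}) (t := t) (measurableSet_singleton s) (Set.to_countable t).measurableSet
    have heq : (∑ j ∈ Finset.range k, u j) ⁻¹' {s} = {x | S k x = s} := by
      ext x; simp [hSdef]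
    rwa [heq] at h
  -- renewal mass
  set p : ℕ → ENNReal := fun s => ∑' k : ℕ, P {x | S k x = s} with hpdef
  have hdisjG : ∀ s, Pairwise (Function.onFun Disjoint fun k => {x | S k x = s} ∩ G) := by
    intro s k l hkl
    refine Set.disjoint_left.mpr ?_
    rintro x ⟨hk, hxG⟩ ⟨hl, -⟩
    exact hkl ((hmono x hxG).injective (hk.trans hl.symm))
  have hp_le_one : ∀ s, p s ≤ 1 := by
    intro s
    have h1 : ∀ k, P {x | S k x = s} = P ({x | S k x = s} ∩ G) := fun k =>
      (measure_inter_conull hGc).symm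
    calc p s = ∑' k, P ({x | S k x = s} ∩ G) := tsum_congr h1
      _ = P (⋃ k, {x | S k x = s} ∩ G) :=
          (measure_iUnion (hdisjG s) fun k => (hAm k s).inter hGm).symm
      _ ≤ 1 := prob_le_one
  -- tail of the step distribution
  set ρ : ENNReal := ENNReal.ofReal r with hρdef
  set Qt : ℕ → ENNReal := fun m => ∑' n : ℕ, ENNReal.ofReal (q (m + 1 + n)) with hQtdef
  have hQt : ∀ k m, P {x | m < u k x} = Qt m := by
    intro k m
    have hset : {x | m < u k x} = ⋃ n : ℕ, {x | u k x = m + 1 + n} := by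
      ext x
      simp only [Set.mem_setOf_eq, Set.mem_iUnion]
      constructor
      · intro h; exact ⟨u k x - (m + 1), by omega⟩
      · rintro ⟨n, hn⟩; omega
    have hd : Pairwise (Function.onFun Disjoint fun n : ℕ => {x | u k x = m + 1 + n}) := by
      intro a b hab
      refine Set.disjoint_left.mpr ?_
      rintro x (ha : u k x = _) (hb : u k x = _)
      omega
    rw [hset, measure_iUnion hd fun n => show MeasurableSet {x | u k x = m + 1 + n} from (hmeas k) (Set.to_countable {m + 1 + n}).measurableSet]
    exact tsum_congr fun n => hlaw k (m + 1 + n)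
  have hofq : ∀ j : ℕ, ENNReal.ofReal (q j) ≤ ENNReal.ofReal c * ρ ^ j := by
    intro j
    calc ENNReal.ofReal (q j) ≤ ENNReal.ofReal (c * r ^ j) := by
          refine ENNReal.ofReal_le_ofReal ?_
          have hb := hqexp j
          rwa [show -ω * (j : ℝ) = (j : ℝ) * (-ω) from mul_comm _ _,
            Real.exp_nat_mul] at hb
      _ = ENNReal.ofReal c * ρ ^ j := by
          rw [ENNReal.ofReal_mul hc.le, ENNReal.ofReal_pow hr0.le]
  have hQt_le : ∀ m, Qt m ≤ ENNReal.ofReal c * ρ ^ (m + 1) * (1 - ρ)⁻¹ := by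
    intro m
    calc Qt m ≤ ∑' n : ℕ, ENNReal.ofReal c * ρ ^ (m + 1) * ρ ^ n := by
          refine ENNReal.tsum_le_tsum fun n => ?_
          calc ENNReal.ofReal (q (m + 1 + n)) ≤ ENNReal.ofReal c * ρ ^ (m + 1 + n) := hofq _
            _ = ENNReal.ofReal c * ρ ^ (m + 1) * ρ ^ n := by rw [pow_add, mul_assoc]
      _ = ENNReal.ofReal c * ρ ^ (m + 1) * (1 - ρ)⁻¹ := by
          rw [ENNReal.tsum_mul_left, ENNReal.tsum_geometric]
  have hhalf : ENNReal.ofReal (1 / 2 : ℝ) = 2⁻¹ := by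
    rw [show (1 / 2 : ℝ) = (2 : ℝ)⁻¹ by norm_num, ENNReal.ofReal_inv_of_pos two_pos,
      ENNReal.ofReal_ofNat]
  have h1ρ : (1 - ρ)⁻¹ = ENNReal.ofReal (1 - r)⁻¹ := by
    rw [ENNReal.ofReal_inv_of_pos h1r, hρdef, ← ENNReal.ofReal_one,
      ← ENNReal.ofReal_sub _ hr0.le]
  have hρ_le_one : ρ ≤ 1 := by
    rw [hρdef, ← ENNReal.ofReal_one]
    exact ENNReal.ofReal_le_ofReal hr1.le
  -- the tail sum bound
  have htail : (∑' i : ℕ, Qt (J + 1 + i)) ≤ 2⁻¹ := by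
    calc (∑' i : ℕ, Qt (J + 1 + i))
        ≤ ∑' i : ℕ, (ENNReal.ofReal c * ρ ^ J * ((1 - ρ)⁻¹)) * ρ ^ i := by
          refine ENNReal.tsum_le_tsum fun i => ?_
          refine le_trans (hQt_le _) ?_
          have hpow : ρ ^ (J + 1 + i + 1) ≤ ρ ^ J * ρ ^ i := by
            calc ρ ^ (J + 1 + i + 1) = ρ ^ J * ρ ^ i * ρ ^ 2 := by ring
              _ ≤ ρ ^ J * ρ ^ i * 1 := mul_le_mul_right (pow_le_one' hρ_le_one 2) _
              _ = ρ ^ J * ρ ^ i := mul_one _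
          calc ENNReal.ofReal c * ρ ^ (J + 1 + i + 1) * (1 - ρ)⁻¹
              ≤ ENNReal.ofReal c * (ρ ^ J * ρ ^ i) * (1 - ρ)⁻¹ :=
                mul_le_mul_left (mul_le_mul_right hpow _) _
            _ = (ENNReal.ofReal c * ρ ^ J * (1 - ρ)⁻¹) * ρ ^ i := by ring
      _ = (ENNReal.ofReal c * ρ ^ J * (1 - ρ)⁻¹) * (1 - ρ)⁻¹ := by
          rw [ENNReal.tsum_mul_left, ENNReal.tsum_geometric]
      _ = ENNReal.ofReal (c * r ^ J * (1 - r)⁻¹ * (1 - r)⁻¹) := by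
          rw [h1ρ, ← ENNReal.ofReal_pow hr0.le, ← ENNReal.ofReal_mul hc.le,
            ← ENNReal.ofReal_mul (by positivity), ← ENNReal.ofReal_mul (by positivity)]
      _ ≤ ENNReal.ofReal ((1 - r) ^ 2 / 2 * (1 - r)⁻¹ * (1 - r)⁻¹) := by
          refine ENNReal.ofReal_le_ofReal ?_
          exact mul_le_mul_of_nonneg_right
            (mul_le_mul_of_nonneg_right hJ (by positivity)) (by positivity)
      _ = ENNReal.ofReal (1 / 2 : ℝ) := by
          congr 1
          field_simp
      _ = 2⁻¹ := hhalf
  -- the quantity δ and ζ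
  have hFne : (Finset.Icc 8 (J + 8)).Nonempty := ⟨8, by simp⟩
  set δ : ℝ := (Finset.Icc 8 (J + 8)).inf' hFne q with hδdef
  have hδpos : 0 < δ := by
    rw [hδdef, Finset.lt_inf'_iff]
    intro b hb
    exact hqpos b (Finset.mem_Icc.mp hb).1
  refine ⟨δ / (4 * (J + 1)), by positivity, ?_⟩
  intro N hN
  set M : ℕ := N - 8 with hMdef
  set T : Set Ω := {x | ∃ k, 1 ≤ k ∧ (∑ i ∈ Finset.range k, u i x) = N} with hTdef
  -- window and skip events
  set Win : Set Ω := ⋃ k, {x | M - J ≤ S k x ∧ S k x ≤ M} with hWindef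
  set Skip : Set Ω := ⋃ k, ⋃ s ∈ Finset.range (M - J),
    ({x | S k x = s} ∩ {x | M - s < u k x}) with hSkipdef
  have hcover : G ⊆ Win ∪ Skip := by
    intro x hx
    have hex : ∃ k, M < S k x := ⟨M + 1, lt_of_lt_of_le (by omega) (hgrow x hx (M + 1))⟩
    set k₀ := Nat.find hex with hk₀def
    have hk₀ : M < S k₀ x := Nat.find_spec hex
    have hk₀ne : k₀ ≠ 0 := by
      intro h0
      rw [h0] at hk₀
      simp [hSdef] at hk₀
    have hkle : S (k₀ - 1) x ≤ M := by
      have := Nat.find_min hex (m := k₀ - 1) (by omega)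
      omega
    by_cases hwin : M - J ≤ S (k₀ - 1) x
    · exact Or.inl (Set.mem_iUnion.mpr ⟨k₀ - 1, hwin, hkle⟩)
    · right
      refine Set.mem_iUnion.mpr ⟨k₀ - 1, ?_⟩
      have hsval : S (k₀ - 1) x ∈ Finset.range (M - J) := Finset.mem_range.mpr (by omega)
      refine Set.mem_biUnion hsval ⟨rfl, ?_⟩
      have hsk : S (k₀ - 1 + 1) x = S (k₀ - 1) x + u (k₀ - 1) x := hSsucc _ x
      have hk1 : k₀ - 1 + 1 = k₀ := by omega
      rw [hk1] at hsk
      simp only [Set.mem_setOf_eq]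
      omega
  -- window probability bound
  have hWin_le : P Win ≤ ∑ s ∈ Finset.Icc (M - J) M, p s := by
    have hsub : Win ⊆ ⋃ s ∈ Finset.Icc (M - J) M, ⋃ k, {x | S k x = s} := by
      intro x hx
      obtain ⟨k, h1, h2⟩ := Set.mem_iUnion.mp hx
      exact Set.mem_biUnion (Finset.mem_Icc.mpr ⟨h1, h2⟩) (Set.mem_iUnion.mpr ⟨k, rfl⟩)
    refine le_trans (measure_mono hsub) ?_
    refine le_trans (measure_biUnion_finset_le _ _) ?_
    exact Finset.sum_le_sum fun s _ => le_trans (measure_iUnion_le _)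
      (le_of_eq rfl)
  -- skip probability bound
  have hSkip_le : P Skip ≤ 2⁻¹ := by
    have h1 : P Skip ≤ ∑' k : ℕ, ∑ s ∈ Finset.range (M - J),
        P ({x | S k x = s} ∩ {x | M - s < u k x}) := by
      refine le_trans (measure_iUnion_le _) ?_
      exact ENNReal.tsum_le_tsum fun k => measure_biUnion_finset_le _ _
    have h2 : ∀ k s, P ({x | S k x = s} ∩ {x | M - s < u k x})
        = P {x | S k x = s} * Qt (M - s) := by
      intro k s
      have : {x | M - s < u k x} = u k ⁻¹' {n | M - s < n} := rfl
      rw [this, hind k s _, ← hQt k (M - s)]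
      rfl
    rw [tsum_congr fun k => Finset.sum_congr rfl fun s _ => h2 k s,
      Summable.tsum_finsetSum fun s _ => ENNReal.summable] at h1
    have h3 : ∀ s ∈ Finset.range (M - J),
        (∑' k : ℕ, P {x | S k x = s} * Qt (M - s)) ≤ Qt (M - s) := by
      intro s _
      rw [ENNReal.tsum_mul_right]
      exact mul_le_of_le_one_left' (hp_le_one s)
    refine le_trans h1 (le_trans (Finset.sum_le_sum h3) ?_)
    have h4 : ∑ s ∈ Finset.range (M - J), Qt (M - s)
        = ∑ i ∈ Finset.range (M - J), Qt (J + 1 + i) := by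
      rw [← Finset.sum_range_reflect (fun i => Qt (J + 1 + i)) (M - J)]
      refine Finset.sum_congr rfl fun s hs => ?_
      have hs' := Finset.mem_range.mp hs
      congr 1
      omega
    rw [h4]
    refine le_trans (ENNReal.sum_le_tsum _) ?_
    exact htail
  -- P Win ≥ 1/2
  have hWin_ge : (2⁻¹ : ENNReal) ≤ P Win := by
    have h1 : 1 ≤ P Win + P Skip :=
      le_trans hG1 (le_trans (measure_mono hcover) (measure_union_le _ _))
    have h2 : 1 ≤ P Win + 2⁻¹ := le_trans h1 (add_le_add_right hSkip_le _)
    have h3 : (1 : ENNReal) - 2⁻¹ ≤ P Win := by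
      rw [tsub_le_iff_right]
      exact h2
    have h4 : (1 : ENNReal) - 2⁻¹ = 2⁻¹ :=
      ENNReal.sub_eq_of_eq_add (by simp) ENNReal.inv_two_add_inv_two.symm
    rw [← h4]
    exact h3
  -- find a good point in the window
  set α : ENNReal := ENNReal.ofReal (1 / (4 * (J + 1)) : ℝ) with hαdef
  obtain ⟨s, hsmem, hαs⟩ : ∃ s ∈ Finset.Icc (M - J) M, α ≤ p s := by
    by_contra hcon
    push_neg at hcon
    have hsum : ∑ s ∈ Finset.Icc (M - J) M, p s
        ≤ ∑ _s ∈ Finset.Icc (M - J) M, α :=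
      Finset.sum_le_sum fun s hs => (hcon s hs).le
    have hcard : (Finset.Icc (M - J) M).card ≤ J + 1 := by
      rw [Nat.card_Icc]
      omega
    have h5 : ∑ _s ∈ Finset.Icc (M - J) M, α = (Finset.Icc (M - J) M).card * α := by
      rw [Finset.sum_const, nsmul_eq_mul]
    have h6 : ((Finset.Icc (M - J) M).card : ENNReal) * α ≤ (J + 1 : ℕ) * α :=
      mul_le_mul_left (by exact_mod_cast Nat.cast_le.mpr hcard) _
    have h7 : ((J + 1 : ℕ) : ENNReal) * α = ENNReal.ofReal ((J + 1 : ℕ) * (1 / (4 * (J + 1)))) := by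
      rw [ENNReal.ofReal_mul (by positivity), ENNReal.ofReal_natCast]
    have h8 : ((J + 1 : ℕ) : ℝ) * (1 / (4 * (J + 1))) = 1 / 4 := by
      push_cast
      field_simp
    have h9 : ∑ s ∈ Finset.Icc (M - J) M, p s ≤ ENNReal.ofReal (1 / 4 : ℝ) := by
      rw [← h8, ← h7]
      exact le_trans hsum (le_trans (le_of_eq h5) h6)
    have h10 : (2⁻¹ : ENNReal) ≤ ENNReal.ofReal (1 / 4 : ℝ) :=
      le_trans hWin_ge (le_trans hWin_le h9)
    rw [← hhalf] at h10
    have := (ENNReal.ofReal_le_ofReal_iff (by norm_num)).mp h10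
    norm_num at this
  -- bounds on s
  have hs1 : M - J ≤ s := (Finset.mem_Icc.mp hsmem).1
  have hs2 : s ≤ M := (Finset.mem_Icc.mp hsmem).2
  have hNs : N - s ∈ Finset.Icc 8 (J + 8) := by
    rw [Finset.mem_Icc]
    omega
  have hqge : δ ≤ q (N - s) := Finset.inf'_le q hNs
  -- the hitting events
  set B : ℕ → Set Ω := fun k => ({x | S k x = s} ∩ u k ⁻¹' {N - s}) ∩ G with hBdef
  have hBm : ∀ k, MeasurableSet (B k) :=
    fun k => ((hAm k s).inter ((hmeas k) (measurableSet_singleton _))).inter hGm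
  have hBdisj : Pairwise (Function.onFun Disjoint B) := by
    intro k l hkl
    refine Set.disjoint_left.mpr ?_
    rintro x ⟨⟨hk, -⟩, hxG⟩ ⟨⟨hl, -⟩, -⟩
    exact hkl ((hmono x hxG).injective (hk.trans hl.symm))
  have hBsub : ∀ k, B k ⊆ T := by
    rintro k x ⟨⟨hk, hu⟩, -⟩
    have hx : u k x = N - s := hu
    have h1 : S (k + 1) x = S k x + u k x := hSsucc k x
    have h2 : S k x = s := hk
    have hM : M = N - 8 := hMdef
    refine ⟨k + 1, by omega, ?_⟩
    have h3 : (∑ i ∈ Finset.range (k + 1), u i x) = S (k + 1) x := rfl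
    omega
  have hPB : ∀ k, P (B k) = P {x | S k x = s} * ENNReal.ofReal (q (N - s)) := by
    intro k
    rw [hBdef]
    simp only
    rw [measure_inter_conull hGc, hind k s {N - s}]
    congr 1
    exact hlaw k (N - s)
  have hPT : ENNReal.ofReal (δ / (4 * (J + 1))) ≤ P T := by
    have hunion : P (⋃ k, B k) = p s * ENNReal.ofReal (q (N - s)) := by
      rw [measure_iUnion hBdisj hBm, tsum_congr hPB, ENNReal.tsum_mul_right]
    have hle : p s * ENNReal.ofReal (q (N - s)) ≤ P T := by
      rw [← hunion]
      exact measure_mono (Set.iUnion_subset hBsub)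
    refine le_trans ?_ hle
    calc ENNReal.ofReal (δ / (4 * (J + 1)))
        = ENNReal.ofReal ((1 / (4 * (J + 1))) * δ) := by ring_nf
      _ = α * ENNReal.ofReal δ := by
          rw [ENNReal.ofReal_mul (by positivity)]
      _ ≤ p s * ENNReal.ofReal (q (N - s)) :=
          mul_le_mul' hαs (ENNReal.ofReal_le_ofReal hqge)
  exact (ENNReal.ofReal_le_iff_le_toReal (measure_ne_top P T)).mp hPT
end

section
/- Suppose there are constants c, δ > 0 with p(z, z') ≤ c e^{−δ z'} for every z ≠ 0 and every z', and a constant ζ ∈ (0,1) with p(z, 0) ≥ ζ for every z ≠ 0. Then there exist constants C > 0 and a > 0 such that for every starting state z_0 ≠ 0 and every t > 0, P_{z_0}[∑_{n=1}^{∞} Z_n > t] ≤ C e^{−a t} (the sum being taken in [0, ∞]; since 0 is absorbing this sum equals the total value accumulated before the chain hits 0). -/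
open MeasureTheory ProbabilityTheory
open scoped ENNReal
namespace MarkovTailAux


def mext (N : ℕ) (v : Fin (N+1) → ℕ) : ℕ → ℕ :=
  fun i => if h : i < N + 1 then v ⟨i, h⟩ else 0

lemma mext_zero (N : ℕ) (v : Fin (N+1) → ℕ) : mext N v 0 = v 0 := by
  simp [mext]

lemma mext_cons_succ (N a : ℕ) (v : Fin (N+1) → ℕ) (i : ℕ) :
    mext (N+1) (Fin.cons a v) (i+1) = mext N v i := by
  unfold mext
  by_cases h : i < N + 1
  · rw [dif_pos (by omega : i + 1 < N + 2), dif_pos h]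
    have : (⟨i+1, by omega⟩ : Fin (N+2)) = Fin.succ ⟨i, h⟩ := rfl
    rw [this, Fin.cons_succ]
  · rw [dif_neg (by omega), dif_neg h]

lemma mext_cons_zero (N a : ℕ) (v : Fin (N+1) → ℕ) :
    mext (N+1) (Fin.cons a v) 0 = a := by
  rw [mext_zero]; simp

lemma mext_cons_one (N a : ℕ) (v : Fin (N+1) → ℕ) :
    mext (N+1) (Fin.cons a v) 1 = v 0 :=
  (mext_cons_succ N a v 0).trans (mext_zero N v)

lemma mext_eq (N : ℕ) (v : Fin (N+1) → ℕ) (i : ℕ) (h : i ≤ N) :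
    mext N v i = v ⟨i, by omega⟩ := dif_pos (by omega)

noncomputable def mF (g : ℕ → ℕ → ℝ≥0∞) : ℕ → ℕ → ℝ≥0∞
  | 0, _ => 1
  | (N+1), z => ∑' z' : ℕ, g z z' * mF g N z'

noncomputable def mT (g : ℕ → ℕ → ℝ≥0∞) (N z0 : ℕ) : ℝ≥0∞ :=
  ∑' v : Fin (N+1) → ℕ,
    (if v 0 = z0 then 1 else 0) *
      ∏ i ∈ Finset.range N, g (mext N v i) (mext N v (i+1))

lemma mT_zero (g : ℕ → ℕ → ℝ≥0∞) (z0 : ℕ) : mT g 0 z0 = 1 := by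
  unfold mT
  rw [← ((Equiv.funUnique (Fin 1) ℕ).symm).tsum_eq]
  simpa using tsum_ite_eq z0 (1:ℝ≥0∞)

lemma mT_succ (g : ℕ → ℕ → ℝ≥0∞) (N z0 : ℕ) :
    mT g (N+1) z0 = ∑' z1 : ℕ, g z0 z1 * mT g N z1 := by
  unfold mT
  rw [← (Fin.consEquiv (fun _ : Fin (N+2) => ℕ)).tsum_eq, ENNReal.tsum_prod']
  have key : ∀ (a : ℕ) (v : Fin (N+1) → ℕ),
      (if (Fin.consEquiv (fun _ : Fin (N+2) => ℕ)) (a, v) 0 = z0 then (1:ℝ≥0∞) else 0) *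
        ∏ i ∈ Finset.range (N+1),
          g (mext (N+1) ((Fin.consEquiv (fun _ : Fin (N+2) => ℕ)) (a, v)) i)
            (mext (N+1) ((Fin.consEquiv (fun _ : Fin (N+2) => ℕ)) (a, v)) (i+1)) =
      (if a = z0 then (1:ℝ≥0∞) else 0) *
        (g a (v 0) * ∏ i ∈ Finset.range N, g (mext N v i) (mext N v (i+1))) := by
    intro a v
    have he : (Fin.consEquiv (fun _ : Fin (N+2) => ℕ)) (a, v) = Fin.cons a v := rfl
    rw [he, Finset.prod_range_succ', mext_cons_zero, mext_cons_one]
    simp only [mext_cons_succ, Fin.cons_zero]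
    ring
  calc ∑' (a : ℕ) (v : Fin (N+1) → ℕ), _
      = ∑' (a : ℕ) (v : Fin (N+1) → ℕ),
        (if a = z0 then (1:ℝ≥0∞) else 0) *
          (g a (v 0) * ∏ i ∈ Finset.range N, g (mext N v i) (mext N v (i+1))) :=
        tsum_congr fun a => tsum_congr fun v => key a v
    _ = ∑' (v : Fin (N+1) → ℕ),
          g z0 (v 0) * ∏ i ∈ Finset.range N, g (mext N v i) (mext N v (i+1)) := by
        rw [tsum_eq_single z0 (fun b hb => by simp [hb])]
        simp
    _ = ∑' (v : Fin (N+1) → ℕ) (z1 : ℕ),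
          g z0 z1 * ((if v 0 = z1 then (1:ℝ≥0∞) else 0) *
            ∏ i ∈ Finset.range N, g (mext N v i) (mext N v (i+1))) := by
        apply tsum_congr; intro v
        rw [tsum_eq_single (v 0) (fun b hb => by simp [Ne.symm hb])]
        simp
    _ = ∑' (z1 : ℕ) (v : Fin (N+1) → ℕ),
          g z0 z1 * ((if v 0 = z1 then (1:ℝ≥0∞) else 0) *
            ∏ i ∈ Finset.range N, g (mext N v i) (mext N v (i+1))) :=
        ENNReal.tsum_comm
    _ = _ := tsum_congr fun z1 => ENNReal.tsum_mul_left

lemma mT_eq_mF (g : ℕ → ℕ → ℝ≥0∞) : ∀ N z0, mT g N z0 = mF g N z0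
  | 0, z0 => by rw [mT_zero]; rfl
  | (N+1), z0 => by
      rw [mT_succ]
      show _ = ∑' z' : ℕ, g z0 z' * mF g N z'
      exact tsum_congr fun z1 => by rw [mT_eq_mF g N z1]


lemma mF_bound (g : ℕ → ℕ → ℝ≥0∞) (h00 : g 0 0 = 1)
    (h0 : ∀ z', z' ≠ 0 → g 0 z' = 0) (hg0 : ∀ z, g z 0 ≤ 1)
    (r : ℝ) (hr0 : 0 ≤ r) (hr1 : r < 1)
    (hrow : ∀ z, z ≠ 0 → ∑' z' : ℕ, g z (z'+1) ≤ ENNReal.ofReal r) :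
    ∀ N, mF g N 0 = 1 ∧ ∀ z, mF g N z ≤ ENNReal.ofReal (1/(1-r)) := by
  have h1r : (0:ℝ) < 1 - r := by linarith
  have hG1 : (1:ℝ≥0∞) ≤ ENNReal.ofReal (1/(1-r)) := by
    rw [ENNReal.one_le_ofReal]
    rw [le_div_iff₀ h1r]; linarith
  intro N
  induction N with
  | zero => exact ⟨rfl, fun z => hG1⟩
  | succ N ih =>
    obtain ⟨ih0, ihb⟩ := ih
    have hzero : mF g (N+1) 0 = 1 := by
      show (∑' z' : ℕ, g 0 z' * mF g N z') = 1
      rw [tsum_eq_single 0 (fun b hb => by rw [h0 b hb, zero_mul])]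
      rw [h00, ih0, one_mul]
    refine ⟨hzero, fun z => ?_⟩
    by_cases hz : z = 0
    · rw [hz, hzero]; exact hG1
    · show (∑' z' : ℕ, g z z' * mF g N z') ≤ _
      rw [tsum_eq_zero_add' ENNReal.summable]
      have hhead : g z 0 * mF g N 0 ≤ 1 := by rw [ih0, mul_one]; exact hg0 z
      have htail : (∑' z' : ℕ, g z (z'+1) * mF g N (z'+1))
          ≤ ENNReal.ofReal r * ENNReal.ofReal (1/(1-r)) := by
        calc (∑' z' : ℕ, g z (z'+1) * mF g N (z'+1))
            ≤ ∑' z' : ℕ, g z (z'+1) * ENNReal.ofReal (1/(1-r)) :=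
              ENNReal.tsum_le_tsum fun z' => mul_le_mul_right (ihb _) _
          _ = (∑' z' : ℕ, g z (z'+1)) * ENNReal.ofReal (1/(1-r)) :=
              ENNReal.tsum_mul_right
          _ ≤ _ := mul_le_mul_left (hrow z hz) _
      calc g z 0 * mF g N 0 + ∑' z' : ℕ, g z (z'+1) * mF g N (z'+1)
          ≤ 1 + ENNReal.ofReal r * ENNReal.ofReal (1/(1-r)) := add_le_add hhead htail
        _ = ENNReal.ofReal (1 + r * (1/(1-r))) := by
            rw [← ENNReal.ofReal_mul hr0, ENNReal.ofReal_add zero_le_one (by positivity)]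
            norm_num
        _ = ENNReal.ofReal (1/(1-r)) := by
            congr 1
            field_simp
            ring
  
lemma choose_theta (p : ℕ → ℕ → ℝ) (hp0 : ∀ z z', 0 ≤ p z z') (hp1 : ∀ z, HasSum (p z) 1)
    (c δ : ℝ) (hc : 0 < c) (hδ : 0 < δ)
    (hexp : ∀ z z', z ≠ 0 → p z z' ≤ c * Real.exp (-δ * z'))
    (ζ : ℝ) (hζ : ζ ∈ Set.Ioo (0 : ℝ) 1) (hζp : ∀ z, z ≠ 0 → ζ ≤ p z 0) :
    ∃ θ : ℝ, 0 < θ ∧ θ ≤ δ/2 ∧ ∀ z, z ≠ 0 →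
      (∑' z' : ℕ, ENNReal.ofReal (p z (z'+1) * Real.exp (θ * ((z'+1 : ℕ) : ℝ))))
        ≤ ENNReal.ofReal (1 - ζ/4) := by
  obtain ⟨hζ0, hζ1⟩ := hζ
  set β : ℝ := Real.exp (-(δ/2)) with hβ
  have hβ0 : 0 < β := Real.exp_pos _
  have hβ1 : β < 1 := Real.exp_lt_one_iff.mpr (by linarith)
  obtain ⟨n, hn⟩ := exists_pow_lt_of_lt_one
    (show (0:ℝ) < ζ * (1 - β) / (4 * c) from by
      have hb : (0:ℝ) < 1 - β := by linarith
      positivity) hβ1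
  set K : ℕ := n + 1 with hK
  have hβK : c * β ^ (K + 1) / (1 - β) < ζ / 4 := by
    have h1 : β ^ (K+1) ≤ β ^ n := pow_le_pow_of_le_one hβ0.le hβ1.le (by omega)
    have h2 : β ^ (K+1) < ζ * (1 - β) / (4 * c) := lt_of_le_of_lt h1 hn
    rw [div_lt_iff₀ (by linarith)]
    calc c * β ^ (K+1) < c * (ζ * (1 - β) / (4 * c)) := mul_lt_mul_of_pos_left h2 hc
      _ = ζ / 4 * (1 - β) := by field_simp
  have hrat : (1:ℝ) < (1 - ζ/2)/(1-ζ) := by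
    rw [lt_div_iff₀ (by linarith)]; linarith
  set θ : ℝ := min (δ/2) (Real.log ((1 - ζ/2)/(1-ζ)) / K) with hθ
  have hθpos : 0 < θ := lt_min (by linarith) (div_pos (Real.log_pos hrat) (by positivity))
  have hθδ : θ ≤ δ/2 := min_le_left _ _
  refine ⟨θ, hθpos, hθδ, fun z hz => ?_⟩
  have hpt : ∀ m : ℕ, p z (m+1) * Real.exp (θ * ((m+1 : ℕ):ℝ)) ≤ c * β ^ (m+1) := by
    intro m
    have h1 : p z (m+1) ≤ c * Real.exp (-δ * ((m+1:ℕ):ℝ)) := hexp z (m+1) hz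
    have hnn : (0:ℝ) ≤ ((m+1:ℕ):ℝ) := by positivity
    have h2 : p z (m+1) * Real.exp (θ * ((m+1:ℕ):ℝ))
        ≤ c * Real.exp ((θ - δ) * ((m+1:ℕ):ℝ)) := by
      calc p z (m+1) * Real.exp (θ * ((m+1:ℕ):ℝ))
          ≤ (c * Real.exp (-δ * ((m+1:ℕ):ℝ))) * Real.exp (θ * ((m+1:ℕ):ℝ)) :=
            mul_le_mul_of_nonneg_right h1 (Real.exp_pos _).le
        _ = c * Real.exp ((θ - δ) * ((m+1:ℕ):ℝ)) := by
            rw [mul_assoc, ← Real.exp_add]; ring_nf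
    refine h2.trans ?_
    have h3 : (θ - δ) * ((m+1:ℕ):ℝ) ≤ (-(δ/2)) * ((m+1:ℕ):ℝ) := by
      apply mul_le_mul_of_nonneg_right _ hnn; linarith
    have h4 : β ^ (m+1) = Real.exp ((-(δ/2)) * ((m+1:ℕ):ℝ)) := by
      rw [hβ, ← Real.exp_nat_mul]; ring_nf
    rw [h4]
    exact mul_le_mul_of_nonneg_left (Real.exp_le_exp.mpr h3) hc.le
  have hnn : ∀ m : ℕ, 0 ≤ p z (m+1) * Real.exp (θ * ((m+1 : ℕ):ℝ)) :=
    fun m => mul_nonneg (hp0 _ _) (Real.exp_pos _).le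
  have hgeo : Summable (fun m : ℕ => c * β ^ (m+1)) := by
    have h5 : Summable (fun m : ℕ => (c * β) * β ^ m) :=
      (summable_geometric_of_lt_one hβ0.le hβ1).mul_left (c * β)
    exact h5.congr (fun m => by rw [pow_succ]; ring)
  have hsum : Summable (fun m : ℕ => p z (m+1) * Real.exp (θ * ((m+1 : ℕ):ℝ))) :=
    Summable.of_nonneg_of_le hnn hpt hgeo
  rw [← ENNReal.ofReal_tsum_of_nonneg hnn hsum]
  apply ENNReal.ofReal_le_ofReal
  set f : ℕ → ℝ := fun m => p z (m+1) * Real.exp (θ * ((m+1 : ℕ):ℝ)) with hf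
  have hsplit : (∑ i ∈ Finset.range K, f i) + ∑' i, f (i + K) = ∑' i, f i :=
    Summable.sum_add_tsum_nat_add' (hsum.comp_injective (add_left_injective K))
  have hKR : (0:ℝ) < (K:ℝ) := by positivity
  have hexpθK : Real.exp (θ * K) ≤ (1 - ζ/2)/(1-ζ) := by
    have h6 : θ * K ≤ Real.log ((1 - ζ/2)/(1-ζ)) := by
      have h7 := min_le_right (δ/2) (Real.log ((1 - ζ/2)/(1-ζ)) / K)
      calc θ * K ≤ (Real.log ((1 - ζ/2)/(1-ζ)) / K) * K :=
            mul_le_mul_of_nonneg_right h7 hKR.le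
        _ = Real.log ((1 - ζ/2)/(1-ζ)) := by field_simp
    calc Real.exp (θ * K) ≤ Real.exp (Real.log ((1 - ζ/2)/(1-ζ))) := Real.exp_le_exp.mpr h6
      _ = (1 - ζ/2)/(1-ζ) := Real.exp_log (by positivity)
  have hsum_p : (∑ i ∈ Finset.range K, p z (i+1)) ≤ 1 - ζ := by
    have h1 : (∑ i ∈ Finset.range (K+1), p z i) ≤ 1 := by
      rw [← (hp1 z).tsum_eq]
      exact Summable.sum_le_tsum _ (fun i _ => hp0 z i) (hp1 z).summable
    rw [Finset.sum_range_succ'] at h1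
    have := hζp z hz
    linarith
  have hhead : (∑ i ∈ Finset.range K, f i) ≤ 1 - ζ/2 := by
    have h1 : ∀ i ∈ Finset.range K, f i ≤ p z (i+1) * ((1 - ζ/2)/(1-ζ)) := by
      intro i hi
      rw [Finset.mem_range] at hi
      have hble : Real.exp (θ * ((i+1:ℕ):ℝ)) ≤ (1 - ζ/2)/(1-ζ) :=
        (Real.exp_le_exp.mpr (mul_le_mul_of_nonneg_left (Nat.cast_le.mpr hi) hθpos.le)).trans
          hexpθK
      exact mul_le_mul_of_nonneg_left hble (hp0 _ _)
    calc (∑ i ∈ Finset.range K, f i) ≤ ∑ i ∈ Finset.range K, p z (i+1) * ((1 - ζ/2)/(1-ζ)) :=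
          Finset.sum_le_sum h1
      _ = (∑ i ∈ Finset.range K, p z (i+1)) * ((1 - ζ/2)/(1-ζ)) := by
          rw [← Finset.sum_mul]
      _ ≤ (1 - ζ) * ((1 - ζ/2)/(1-ζ)) :=
          mul_le_mul_of_nonneg_right hsum_p (by positivity)
      _ = 1 - ζ/2 := by
          have h1ζ : (1:ℝ) - ζ ≠ 0 := by linarith
          field_simp
  have htail : (∑' i, f (i + K)) ≤ ζ/4 := by
    have h1 : (∑' i, f (i + K)) ≤ ∑' i : ℕ, c * β ^ (i + K + 1) := by
      apply Summable.tsum_le_tsum _ (hsum.comp_injective (add_left_injective K)) _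
      · intro i; exact hpt (i + K)
      · exact (hgeo.comp_injective (add_left_injective K)).congr (fun i => rfl)
    refine h1.trans ?_
    have h2 : (∑' i : ℕ, c * β ^ (i + K + 1)) = c * β ^ (K+1) / (1 - β) := by
      have h3 : ∀ i : ℕ, c * β ^ (i + K + 1) = (c * β ^ (K+1)) * β ^ i := by
        intro i; rw [show i + K + 1 = (K+1) + i by ring, pow_add]; ring
      rw [tsum_congr h3, tsum_mul_left, tsum_geometric_of_lt_one hβ0.le hβ1]
      field_simp
    rw [h2]; linarith
  show (∑' i, f i) ≤ 1 - ζ/4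
  rw [← hsplit]; linarith


lemma ofReal_prod {ι : Type*} (s : Finset ι) (f : ι → ℝ) (h : ∀ i ∈ s, 0 ≤ f i) :
    ENNReal.ofReal (∏ i ∈ s, f i) = ∏ i ∈ s, ENNReal.ofReal (f i) := by
  induction s using Finset.cons_induction with
  | empty => simp
  | cons a s ha ih =>
    rw [Finset.prod_cons, Finset.prod_cons,
      ENNReal.ofReal_mul (h a (Finset.mem_cons_self a s)),
      ih (fun i hi => h i (Finset.mem_cons_of_mem hi))]

end MarkovTailAux
/-- For a Markov chain on `ℕ` absorbed at `0`, with transition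
probabilities exponentially decaying in the target state (`p z z' ≤ c e^{−δ z'}` for
`z ≠ 0`) and a uniform probability `ζ` of jumping to `0` from any `z ≠ 0`, the total
value accumulated before absorption has uniformly exponential tails:
`P_{z₀}[∑_{n ≥ 1} Z_n > t] ≤ C e^{−a t}`. -/
theorem markov_total_accumulation_exponential_tail
    {Ω : Type*} [MeasurableSpace Ω]
    (p : ℕ → ℕ → ℝ) (hp0 : ∀ z z', 0 ≤ p z z') (hp1 : ∀ z, HasSum (p z) 1)
    (habs : p 0 0 = 1)
    (Pz : ℕ → Measure Ω) (hprob : ∀ z0, IsProbabilityMeasure (Pz z0))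
    (Z : ℕ → Ω → ℕ) (hZmeas : ∀ n, Measurable (Z n))
    (hfdd : ∀ (z0 n : ℕ) (w : ℕ → ℕ),
      Pz z0 {x | ∀ i ≤ n, Z i x = w i} =
        (if w 0 = z0 then 1 else 0) *
          ∏ i ∈ Finset.range n, ENNReal.ofReal (p (w i) (w (i + 1))))
    (c δ : ℝ) (hc : 0 < c) (hδ : 0 < δ)
    (hexp : ∀ z z', z ≠ 0 → p z z' ≤ c * Real.exp (-δ * z'))
    (ζ : ℝ) (hζ : ζ ∈ Set.Ioo (0 : ℝ) 1) (hζp : ∀ z, z ≠ 0 → ζ ≤ p z 0) :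
    ∃ C > (0 : ℝ), ∃ a > (0 : ℝ), ∀ z0 : ℕ, z0 ≠ 0 → ∀ t : ℝ, 0 < t →
      Pz z0 {x | ENNReal.ofReal t < ∑' n : ℕ, (Z (n + 1) x : ℝ≥0∞)}
        ≤ ENNReal.ofReal (C * Real.exp (-a * t)) := by
  classical
  obtain ⟨hζ0, hζ1⟩ := hζ
  obtain ⟨θ, hθpos, hθδ, hθrow⟩ := MarkovTailAux.choose_theta p hp0 hp1 c δ hc hδ hexp ζ ⟨hζ0, hζ1⟩ hζp
  set r : ℝ := 1 - ζ/4 with hr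
  set g : ℕ → ℕ → ℝ≥0∞ := fun z z' => ENNReal.ofReal (p z z' * Real.exp (θ * (z' : ℝ))) with hg
  -- hypotheses of mF_bound
  have h00 : g 0 0 = 1 := by
    simp only [hg, Nat.cast_zero, mul_zero, Real.exp_zero, mul_one, habs, ENNReal.ofReal_one]
  have hp_le_one : ∀ z z', p z z' ≤ 1 := by
    intro z z'
    exact le_hasSum (hp1 z) z' (fun i _ => hp0 z i)
  have h0 : ∀ z', z' ≠ 0 → g 0 z' = 0 := by
    intro z' hz'
    have hpair : p 0 0 + p 0 z' ≤ 1 := by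
      have := sum_le_hasSum ({0, z'} : Finset ℕ) (fun i _ => hp0 0 i) (hp1 0)
      rwa [Finset.sum_pair (Ne.symm hz')] at this
    have : p 0 z' = 0 := le_antisymm (by linarith [habs]) (hp0 0 z')
    simp [hg, this]
  have hg0 : ∀ z, g z 0 ≤ 1 := by
    intro z
    simp only [hg, Nat.cast_zero, mul_zero, Real.exp_zero, mul_one]
    exact ENNReal.ofReal_le_one.mpr (hp_le_one z 0)
  have hrow : ∀ z, z ≠ 0 → (∑' z' : ℕ, g z (z'+1)) ≤ ENNReal.ofReal r := by
    intro z hz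
    exact hθrow z hz
  have hr0 : 0 ≤ r := by rw [hr]; linarith
  have hr1 : r < 1 := by rw [hr]; linarith
  have hFb := MarkovTailAux.mF_bound g h00 h0 hg0 r hr0 hr1 hrow
  have h1rpos : (0:ℝ) < 1 - r := by rw [hr]; linarith
  refine ⟨1/(1-r), by positivity, θ, hθpos, fun z0 hz0 t ht => ?_⟩
  -- the events
  set E : ℕ → Set Ω := fun N =>
    {x | ENNReal.ofReal t < ∑ n ∈ Finset.range N, (Z (n + 1) x : ℝ≥0∞)} with hE
  have hEmono : Monotone E := by
    intro M N hMN x hx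
    simp only [hE, Set.mem_setOf_eq] at hx ⊢
    exact lt_of_lt_of_le hx (Finset.sum_le_sum_of_subset (Finset.range_subset_range.mpr hMN))
  have hsub : {x | ENNReal.ofReal t < ∑' n : ℕ, (Z (n + 1) x : ℝ≥0∞)} ⊆ ⋃ N, E N := by
    intro x hx
    rw [Set.mem_setOf_eq, ENNReal.tsum_eq_iSup_sum, lt_iSup_iff] at hx
    obtain ⟨s, hs⟩ := hx
    obtain ⟨N, hN⟩ := s.exists_nat_subset_range
    exact Set.mem_iUnion.mpr ⟨N, lt_of_lt_of_le hs (Finset.sum_le_sum_of_subset hN)⟩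
  -- bound each E N
  have hEN : ∀ N, Pz z0 (E N) ≤
      ENNReal.ofReal (Real.exp (-θ * t)) * ENNReal.ofReal (1/(1-r)) := by
    intro N
    set cond : (Fin (N+1) → ℕ) → Prop := fun v =>
      ENNReal.ofReal t < ∑ n ∈ Finset.range N, ((MarkovTailAux.mext N v (n+1) : ℕ) : ℝ≥0∞)
      with hcond
    set Cyl : (Fin (N+1) → ℕ) → Set Ω := fun v =>
      {x | ∀ i ≤ N, Z i x = MarkovTailAux.mext N v i} with hCyl
    have hsub2 : E N ⊆ ⋃ v : Fin (N+1) → ℕ, (if cond v then Cyl v else ∅) := by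
      intro x hx
      set v : Fin (N+1) → ℕ := fun i => Z i x with hv
      have hxC : x ∈ Cyl v := by
        intro i hi
        rw [MarkovTailAux.mext_eq N v i hi]
      have hcv : cond v := by
        have heq : ∀ n ∈ Finset.range N,
            ((MarkovTailAux.mext N v (n+1) : ℕ) : ℝ≥0∞) = ((Z (n+1) x : ℕ) : ℝ≥0∞) := by
          intro n hn
          rw [Finset.mem_range] at hn
          rw [MarkovTailAux.mext_eq N v (n+1) (by omega)]
        show ENNReal.ofReal t < ∑ n ∈ Finset.range N, ((MarkovTailAux.mext N v (n+1) : ℕ) : ℝ≥0∞)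
        rw [Finset.sum_congr rfl heq]
        simpa only [hE, Set.mem_setOf_eq] using hx
      refine Set.mem_iUnion.mpr ⟨v, ?_⟩
      rw [if_pos hcv]
      exact hxC
    have hchern : ∀ v : Fin (N+1) → ℕ, cond v →
        (1:ℝ≥0∞) ≤ ENNReal.ofReal (Real.exp (-θ * t)) *
          ∏ i ∈ Finset.range N,
            ENNReal.ofReal (Real.exp (θ * ((MarkovTailAux.mext N v (i+1) : ℕ) : ℝ))) := by
      intro v hcv
      set M : ℕ := ∑ n ∈ Finset.range N, MarkovTailAux.mext N v (n+1) with hM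
      have hMc : (∑ n ∈ Finset.range N, ((MarkovTailAux.mext N v (n+1) : ℕ) : ℝ≥0∞)) = (M:ℝ≥0∞) := by
        rw [hM]; push_cast; rfl
      simp only [hcond] at hcv
      rw [hMc, ← ENNReal.ofReal_natCast M] at hcv
      have htM : t < (M:ℝ) := by
        rwa [ENNReal.ofReal_lt_ofReal_iff_of_nonneg ht.le] at hcv
      have hMreal : (∑ n ∈ Finset.range N, ((MarkovTailAux.mext N v (n+1) : ℕ) : ℝ)) = (M:ℝ) := by
        rw [hM]; push_cast; rfl
      have hexps : (∏ i ∈ Finset.range N,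
          Real.exp (θ * ((MarkovTailAux.mext N v (i+1) : ℕ) : ℝ))) = Real.exp (θ * M) := by
        rw [← Real.exp_sum, ← Finset.mul_sum, hMreal]
      have hprod : (∏ i ∈ Finset.range N,
          ENNReal.ofReal (Real.exp (θ * ((MarkovTailAux.mext N v (i+1) : ℕ) : ℝ)))) =
          ENNReal.ofReal (Real.exp (θ * M)) := by
        rw [← MarkovTailAux.ofReal_prod _ _ (fun i _ => (Real.exp_pos _).le), hexps]
      rw [hprod, ← ENNReal.ofReal_mul (Real.exp_pos _).le, ← Real.exp_add]
      rw [show -θ * t + θ * M = θ * (M - t) by ring]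
      refine ENNReal.one_le_ofReal.mpr (Real.one_le_exp ?_)
      have : (0:ℝ) ≤ M - t := by linarith
      positivity
    have hterm : ∀ v : Fin (N+1) → ℕ,
        Pz z0 (if cond v then Cyl v else ∅) ≤
          ENNReal.ofReal (Real.exp (-θ * t)) *
            ((if MarkovTailAux.mext N v 0 = z0 then 1 else 0) *
              ∏ i ∈ Finset.range N,
                g (MarkovTailAux.mext N v i) (MarkovTailAux.mext N v (i+1))) := by
      intro v
      by_cases hcv : cond v
      · rw [if_pos hcv]
        have hmeas : Pz z0 (Cyl v) =
            (if MarkovTailAux.mext N v 0 = z0 then 1 else 0) *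
              ∏ i ∈ Finset.range N,
                ENNReal.ofReal (p (MarkovTailAux.mext N v i) (MarkovTailAux.mext N v (i+1))) :=
          hfdd z0 N (MarkovTailAux.mext N v)
        calc Pz z0 (Cyl v) = 1 * Pz z0 (Cyl v) := (one_mul _).symm
          _ ≤ (ENNReal.ofReal (Real.exp (-θ * t)) *
              ∏ i ∈ Finset.range N,
                ENNReal.ofReal (Real.exp (θ * ((MarkovTailAux.mext N v (i+1) : ℕ) : ℝ)))) *
              Pz z0 (Cyl v) := mul_le_mul_left (hchern v hcv) _
          _ = ENNReal.ofReal (Real.exp (-θ * t)) *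
              ((if MarkovTailAux.mext N v 0 = z0 then 1 else 0) *
                ∏ i ∈ Finset.range N,
                  g (MarkovTailAux.mext N v i) (MarkovTailAux.mext N v (i+1))) := by
            rw [hmeas]
            have : ∀ i ∈ Finset.range N,
                g (MarkovTailAux.mext N v i) (MarkovTailAux.mext N v (i+1)) =
                ENNReal.ofReal (p (MarkovTailAux.mext N v i) (MarkovTailAux.mext N v (i+1))) *
                  ENNReal.ofReal (Real.exp (θ * ((MarkovTailAux.mext N v (i+1) : ℕ) : ℝ))) := by
              intro i _
              rw [hg, ← ENNReal.ofReal_mul (hp0 _ _)]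
            rw [Finset.prod_congr rfl this, Finset.prod_mul_distrib]
            ring
      · rw [if_neg hcv]
        simp
    calc Pz z0 (E N) ≤ Pz z0 (⋃ v : Fin (N+1) → ℕ, (if cond v then Cyl v else ∅)) :=
          measure_mono hsub2
      _ ≤ ∑' v : Fin (N+1) → ℕ, Pz z0 (if cond v then Cyl v else ∅) := measure_iUnion_le _
      _ ≤ ∑' v : Fin (N+1) → ℕ, ENNReal.ofReal (Real.exp (-θ * t)) *
            ((if MarkovTailAux.mext N v 0 = z0 then 1 else 0) *
              ∏ i ∈ Finset.range N,
                g (MarkovTailAux.mext N v i) (MarkovTailAux.mext N v (i+1))) :=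
          ENNReal.tsum_le_tsum hterm
      _ = ENNReal.ofReal (Real.exp (-θ * t)) * MarkovTailAux.mT g N z0 := by
          rw [ENNReal.tsum_mul_left]
          congr 1
      _ ≤ ENNReal.ofReal (Real.exp (-θ * t)) * ENNReal.ofReal (1/(1-r)) := by
          rw [MarkovTailAux.mT_eq_mF]
          exact mul_le_mul_right ((hFb N).2 z0) _
  calc Pz z0 {x | ENNReal.ofReal t < ∑' n : ℕ, (Z (n + 1) x : ℝ≥0∞)}
      ≤ Pz z0 (⋃ N, E N) := measure_mono hsub
    _ = ⨆ N, Pz z0 (E N) := (hEmono.directed_le).measure_iUnion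
    _ ≤ ENNReal.ofReal (Real.exp (-θ * t)) * ENNReal.ofReal (1/(1-r)) := iSup_le hEN
    _ = ENNReal.ofReal (1/(1-r) * Real.exp (-θ * t)) := by
        rw [← ENNReal.ofReal_mul (Real.exp_pos _).le]
        ring_nf
end

section
/- Suppose there are constants c, δ > 0 with p(z, z') ≤ c e^{−δ z'} for every z ≠ 0 and every z'. Then there exist constants κ > 0, C' > 0 and a' > 0 (depending only on c and δ) such that for every starting state z_0 and every N ≥ 1, P_{z_0}[∑_{n=1}^{N} Z_n > κ N] ≤ C' e^{−a' N}. -/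
open MeasureTheory ProbabilityTheory ENNReal

lemma tsum_pi_fin : ∀ (n : ℕ) (g : Fin n → ℕ → ℝ≥0∞),
    (∑' v : Fin n → ℕ, ∏ j, g j (v j)) = ∏ j, ∑' k, g j k := by
  intro n
  induction n with
  | zero =>
    intro g
    simp only [Finset.univ_eq_empty, Finset.prod_empty]
    exact tsum_eq_single (fun i => i.elim0) (fun b hb => absurd (Subsingleton.elim b _) hb)
  | succ n ih =>
    intro g
    rw [← (Fin.consEquiv fun _ : Fin (n+1) => ℕ).tsum_eq
      (fun v => ∏ j, g j (v j))]
    simp only [Fin.consEquiv_apply]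
    rw [ENNReal.tsum_prod']
    have h1 : ∀ (a : ℕ) (u : Fin n → ℕ),
        (∏ j, g j ((Fin.cons a u : ∀ _ : Fin (n+1), ℕ) j)) = g 0 a * ∏ j : Fin n, g j.succ (u j) := by
      intro a u
      rw [Fin.prod_univ_succ]
      simp
    calc (∑' (a : ℕ) (u : Fin n → ℕ), ∏ j, g j ((Fin.cons a u : ∀ _ : Fin (n+1), ℕ) j))
        = ∑' (a : ℕ), g 0 a * ∑' (u : Fin n → ℕ), ∏ j : Fin n, g j.succ (u j) := by
          congr 1; ext a
          rw [← ENNReal.tsum_mul_left]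
          congr 1; ext u; exact h1 a u
      _ = (∑' a, g 0 a) * ∑' (u : Fin n → ℕ), ∏ j : Fin n, g j.succ (u j) :=
          ENNReal.tsum_mul_right
      _ = ∏ j, ∑' k, g j k := by
          rw [ih (fun j => g j.succ), Fin.prod_univ_succ]

lemma geom_tsum (r : ℝ) (hr0 : 0 ≤ r) (hr1 : r < 1) :
    (∑' k : ℕ, ENNReal.ofReal (r ^ k)) = ENNReal.ofReal ((1 - r)⁻¹) := by
  rw [← ENNReal.ofReal_tsum_of_nonneg (fun k => pow_nonneg hr0 k)
    (summable_geometric_of_lt_one hr0 hr1), tsum_geometric_of_lt_one hr0 hr1]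

/-- For a Markov chain on `ℕ` absorbed at `0` whose transition
probabilities decay exponentially in the target state (`p z z' ≤ c e^{−δ z'}` for
`z ≠ 0`), there are `κ, C', a' > 0` (depending only on `c` and `δ`) such that
`P_{z₀}[∑_{n=1}^N Z_n > κ N] ≤ C' e^{−a' N}` for every start `z₀` and every `N ≥ 1`. -/
theorem markov_partial_sums_large_deviation
    {Ω : Type*} [MeasurableSpace Ω]
    (p : ℕ → ℕ → ℝ) (hp0 : ∀ z z', 0 ≤ p z z') (hp1 : ∀ z, HasSum (p z) 1)
    (habs : p 0 0 = 1)
    (Pz : ℕ → Measure Ω) (hprob : ∀ z0, IsProbabilityMeasure (Pz z0))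
    (Z : ℕ → Ω → ℕ) (hZmeas : ∀ n, Measurable (Z n))
    (hfdd : ∀ (z0 n : ℕ) (w : ℕ → ℕ),
      Pz z0 {x | ∀ i ≤ n, Z i x = w i} =
        (if w 0 = z0 then 1 else 0) *
          ∏ i ∈ Finset.range n, ENNReal.ofReal (p (w i) (w (i + 1))))
    (c δ : ℝ) (hc : 0 < c) (hδ : 0 < δ)
    (hexp : ∀ z z', z ≠ 0 → p z z' ≤ c * Real.exp (-δ * z')) :
    ∃ κ > (0 : ℝ), ∃ C' > (0 : ℝ), ∃ a' > (0 : ℝ), ∀ (z0 N : ℕ), 1 ≤ N →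
      Pz z0 {x | κ * N < ∑ n ∈ Finset.Icc 1 N, (Z n x : ℝ)}
        ≤ ENNReal.ofReal (C' * Real.exp (-a' * N)) := by
  classical
  have hM1 : (1:ℝ) ≤ max 1 c := le_max_left _ _
  set M := max 1 c with hMdef
  have hM0 : (0:ℝ) < M := lt_of_lt_of_le one_pos hM1
  set r := Real.exp (-(δ/2)) with hrdef
  have hr0 : (0:ℝ) < r := Real.exp_pos _
  have hr1 : r < 1 := by
    rw [hrdef, Real.exp_lt_one_iff]; linarith
  have h1r : (0:ℝ) < 1 - r := by linarith
  set R := (1 - r)⁻¹ with hRdef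
  have hR0 : (0:ℝ) < R := inv_pos.mpr h1r
  have hR1 : (1:ℝ) ≤ R := one_le_inv_iff₀.mpr ⟨h1r, by linarith⟩
  have hlogM : 0 ≤ Real.log M := Real.log_nonneg hM1
  have hlogR : 0 ≤ Real.log R := Real.log_nonneg hR1
  set κ := (2/δ) * (Real.log M + Real.log R + 1) with hκdef
  have hκ0 : 0 < κ := mul_pos (by positivity) (by linarith)
  have key : Real.log M + Real.log R - δ/2 * κ = -1 := by
    rw [hκdef]; field_simp; ring
  -- row at 0 is a point mass at 0
  have hrow0 : ∀ z', z' ≠ 0 → p 0 z' = 0 := by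
    intro z' hz'
    have hs : ∑ i ∈ ({0, z'} : Finset ℕ), p 0 i ≤ 1 := by
      have h := (hp1 0).summable.sum_le_tsum ({0, z'} : Finset ℕ) (fun i _ => hp0 0 i)
      rwa [(hp1 0).tsum_eq] at h
    rw [Finset.sum_pair (Ne.symm hz')] at hs
    rw [habs] at hs
    have := hp0 0 z'
    linarith
  -- uniform one-step bound
  have hstep : ∀ z z', p z z' ≤ M * Real.exp (-δ * z') := by
    intro z z'
    rcases Nat.eq_zero_or_pos z with hz | hz
    · subst hz
      rcases Nat.eq_zero_or_pos z' with hz' | hz'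
      · subst hz'
        simpa [habs] using hM1
      · rw [hrow0 z' (by omega)]
        positivity
    · refine le_trans (hexp z z' (by omega)) ?_
      exact mul_le_mul_of_nonneg_right (le_max_right 1 c) (Real.exp_nonneg _)
  refine ⟨κ, hκ0, 1, one_pos, 1, one_pos, fun z0 N hN => ?_⟩
  set w : (Fin (N+1) → ℕ) → ℕ → ℕ :=
    fun v i => if h : i < N + 1 then v ⟨i, h⟩ else 0 with hwdef
  have hwv : ∀ (v : Fin (N+1) → ℕ) (i : ℕ) (h : i < N + 1), w v i = v ⟨i, h⟩ :=
    fun v i h => dif_pos h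
  set g : Fin (N+1) → ℕ → ℝ≥0∞ := fun j k =>
    if j = 0 then (if k = z0 then 1 else 0) else ENNReal.ofReal (r ^ k) with hgdef
  set T : (Fin (N+1) → ℕ) → ℝ := fun v => ∑ n ∈ Finset.Icc 1 N, (w v n : ℝ) with hTdef
  set S : (Fin (N+1) → ℕ) → Set Ω := fun v =>
    if κ * N < T v then {x | ∀ i ≤ N, Z i x = w v i} else ∅ with hSdef
  -- covering
  have hcover : {x | κ * N < ∑ n ∈ Finset.Icc 1 N, (Z n x : ℝ)} ⊆ ⋃ v, S v := by
    intro x hx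
    refine Set.mem_iUnion.mpr ⟨fun j => Z (j : ℕ) x, ?_⟩
    have hTx : T (fun j : Fin (N+1) => Z (j : ℕ) x) = ∑ n ∈ Finset.Icc 1 N, (Z n x : ℝ) := by
      show (∑ n ∈ Finset.Icc 1 N, ((w (fun j : Fin (N+1) => Z (j : ℕ) x) n : ℕ) : ℝ)) = _
      refine Finset.sum_congr rfl fun n hn => ?_
      have hn' : n < N + 1 := Nat.lt_succ_of_le (Finset.mem_Icc.mp hn).2
      rw [hwv (fun j : Fin (N+1) => Z (j : ℕ) x) n hn']
    simp only [hSdef]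
    rw [if_pos (by rw [hTx]; exact hx)]
    intro i hi
    rw [hwv (fun j : Fin (N+1) => Z (j : ℕ) x) i (Nat.lt_succ_of_le hi)]
  have hTsum : ∀ v, T v = ∑ i ∈ Finset.range N, ((w v (i+1) : ℕ) : ℝ) := by
    intro v
    show (∑ n ∈ Finset.Icc 1 N, ((w v n : ℕ) : ℝ)) = _
    rw [← Finset.Ico_add_one_right_eq_Icc, Finset.sum_Ico_eq_sum_range]
    refine Finset.sum_congr rfl fun i _ => ?_
    rw [add_comm]
  -- per-cylinder bound, real part
  have hprodR : ∀ v : Fin (N+1) → ℕ, κ * N < T v →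
      (∏ i ∈ Finset.range N, p (w v i) (w v (i+1)))
        ≤ (M ^ N * Real.exp (-(δ/2) * (κ * N))) * ∏ i ∈ Finset.range N, r ^ (w v (i+1)) := by
    intro v hv
    have hTnn : (0:ℝ) ≤ T v := by
      rw [hTsum v]
      exact Finset.sum_nonneg fun i _ => Nat.cast_nonneg _
    have hexpprod : Real.exp (-(δ/2) * T v) = ∏ i ∈ Finset.range N, r ^ (w v (i+1)) := by
      rw [hTsum v, Finset.mul_sum, Real.exp_sum]
      refine Finset.prod_congr rfl fun i _ => ?_
      rw [hrdef, ← Real.exp_nat_mul]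
      ring_nf
    calc (∏ i ∈ Finset.range N, p (w v i) (w v (i+1)))
        ≤ ∏ i ∈ Finset.range N, (M * Real.exp (-δ * (w v (i+1)))) :=
          Finset.prod_le_prod (fun i _ => hp0 _ _) (fun i _ => hstep _ _)
      _ = M ^ N * Real.exp (∑ i ∈ Finset.range N, (-δ * ((w v (i+1) : ℕ) : ℝ))) := by
          rw [Finset.prod_mul_distrib, Finset.prod_const, Real.exp_sum, Finset.card_range]
      _ = M ^ N * Real.exp (-δ * T v) := by
          rw [hTsum v, Finset.mul_sum]
      _ = M ^ N * (Real.exp (-(δ/2) * T v) * Real.exp (-(δ/2) * T v)) := by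
          rw [← Real.exp_add]; ring_nf
      _ ≤ M ^ N * (Real.exp (-(δ/2) * (κ * N)) * Real.exp (-(δ/2) * T v)) := by
          have h1 : Real.exp (-(δ/2) * T v) ≤ Real.exp (-(δ/2) * (κ * N)) := by
            apply Real.exp_le_exp.mpr
            nlinarith
          have h2 : (0:ℝ) ≤ Real.exp (-(δ/2) * T v) := Real.exp_nonneg _
          exact mul_le_mul_of_nonneg_left (mul_le_mul_of_nonneg_right h1 h2)
            (pow_nonneg hM0.le N)
      _ = (M ^ N * Real.exp (-(δ/2) * (κ * N))) * ∏ i ∈ Finset.range N, r ^ (w v (i+1)) := by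
          rw [← hexpprod]; ring
  -- product over Fin identification
  have hgprod : ∀ v : Fin (N+1) → ℕ, (∏ j, g j (v j)) =
      (if w v 0 = z0 then (1:ℝ≥0∞) else 0) *
        ∏ i ∈ Finset.range N, ENNReal.ofReal (r ^ (w v (i+1))) := by
    intro v
    have hA : g 0 (v 0) = (if w v 0 = z0 then (1:ℝ≥0∞) else 0) := by
      rw [hwv v 0 (Nat.succ_pos N)]
      rw [hgdef]; dsimp only; rw [if_pos rfl]; rfl
    have hB : (∏ j : Fin N, g j.succ (v j.succ))
        = ∏ i ∈ Finset.range N, ENNReal.ofReal (r ^ (w v (i+1))) := by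
      rw [← Fin.prod_univ_eq_prod_range (fun i => ENNReal.ofReal (r ^ (w v (i+1)))) N]
      refine Finset.prod_congr rfl fun j _ => ?_
      have h2 : w v ((j:ℕ)+1) = v j.succ := by
        rw [hwv v ((j:ℕ)+1) (by omega)]
        congr 1
      simp only [hgdef, if_neg (Fin.succ_ne_zero j), h2]
    rw [Fin.prod_univ_succ, hA, hB]
  -- per-cylinder bound in ℝ≥0∞
  have hterm : ∀ v : Fin (N+1) → ℕ, Pz z0 (S v) ≤
      ENNReal.ofReal (M ^ N * Real.exp (-(δ/2) * (κ * N))) * ∏ j, g j (v j) := by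
    intro v
    by_cases hv : κ * N < T v
    · simp only [hSdef, if_pos hv]
      rw [hfdd z0 N (w v), hgprod v, ← mul_assoc,
        mul_comm (ENNReal.ofReal (M ^ N * Real.exp (-(δ/2) * (κ * N)))), mul_assoc]
      refine mul_le_mul_right ?_ _
      rw [← ENNReal.ofReal_prod_of_nonneg (fun i _ => pow_nonneg hr0.le _),
        ← ENNReal.ofReal_mul (by positivity)]
      calc (∏ i ∈ Finset.range N, ENNReal.ofReal (p (w v i) (w v (i+1))))
          = ENNReal.ofReal (∏ i ∈ Finset.range N, p (w v i) (w v (i+1))) :=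
            (ENNReal.ofReal_prod_of_nonneg (fun i _ => hp0 _ _)).symm
        _ ≤ _ := ENNReal.ofReal_le_ofReal (hprodR v hv)
    · simp [hSdef, if_neg hv]
  refine (measure_mono hcover).trans ?_
  refine (measure_iUnion_le S).trans ?_
  refine (ENNReal.tsum_le_tsum hterm).trans ?_
  rw [ENNReal.tsum_mul_left, tsum_pi_fin (N+1) g]
  have hg0 : (∑' k, g 0 k) = 1 := by
    simp only [hgdef, if_pos rfl]
    exact tsum_ite_eq z0 1
  have hgj : ∀ j : Fin N, (∑' k, g j.succ k) = ENNReal.ofReal R := by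
    intro j
    simp only [hgdef, if_neg (Fin.succ_ne_zero j)]
    rw [geom_tsum r hr0.le hr1, hRdef]
  rw [Fin.prod_univ_succ, hg0, one_mul,
    Finset.prod_congr rfl (fun j _ => hgj j), Finset.prod_const, Finset.card_univ,
    Fintype.card_fin]
  rw [← ENNReal.ofReal_pow hR0.le, ← ENNReal.ofReal_mul (by positivity)]
  apply ENNReal.ofReal_le_ofReal
  have e1 : M ^ N = Real.exp (N * Real.log M) := by
    rw [Real.exp_nat_mul, Real.exp_log hM0]
  have e2 : R ^ N = Real.exp (N * Real.log R) := by
    rw [Real.exp_nat_mul, Real.exp_log hR0]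
  rw [e1, e2, one_mul, ← Real.exp_add, ← Real.exp_add]
  apply le_of_eq
  congr 1
  have h3 : (N:ℝ) * Real.log M + -(δ/2) * (κ * N) + N * Real.log R
      = N * (Real.log M + Real.log R - δ/2 * κ) := by ring
  rw [h3, key]
  ring
end

section
/- Let ε > 0 and c > 0 with 4cε ≤ 1, and suppose that for every λ ∈ [ε/2, 3ε/2] one has |∑_{u ∈ ℛ} w_λ(u) − (ε/λ)²| ≤ cε. Then there exists a unique λ* > 0 such that ∑_{u ∈ ℛ} w_{λ*}(u) = 1, and this λ* satisfies |λ* − ε| ≤ c ε². -/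
/-- The set `ℛ` of finite nonempty sequences of quadruples of positive integers
`(u_{ℓ,1}, u_{ℓ,2}, u_{ℓ,3}, u_{ℓ,4})_{ℓ = 0,…,k}` with `u_{0,1} ≥ 3` and, for every
`ℓ`, `u_{ℓ,1} ≥ 1`, `u_{ℓ,2} ≥ 2`, `u_{ℓ,3} ≥ 1`, `u_{ℓ,4} ≥ 2`. -/
def Rset : Set (Σ k : ℕ, Fin (k + 1) → Fin 4 → ℕ) :=
  {s | 3 ≤ s.2 0 0 ∧ ∀ ℓ, 1 ≤ s.2 ℓ 0 ∧ 2 ≤ s.2 ℓ 1 ∧ 1 ≤ s.2 ℓ 2 ∧ 2 ≤ s.2 ℓ 3}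

/-- The length `|u| = ∑_{ℓ,m} u_{ℓ,m}` of a sequence of quadruples. -/
def seqLen (s : Σ k : ℕ, Fin (k + 1) → Fin 4 → ℕ) : ℕ := ∑ ℓ, ∑ m, s.2 ℓ m

lemma seqLen_pos_of_mem {s : Σ k : ℕ, Fin (k + 1) → Fin 4 → ℕ} (hs : s ∈ Rset) :
    0 < seqLen s := by
  have h1 : s.2 0 0 ≤ ∑ m, s.2 0 m :=
    Finset.single_le_sum (fun i _ => Nat.zero_le _) (Finset.mem_univ 0)
  have h2 : (∑ m, s.2 0 m) ≤ ∑ ℓ, ∑ m, s.2 ℓ m :=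
    Finset.single_le_sum (f := fun ℓ => ∑ m, s.2 ℓ m) (fun i _ => Nat.zero_le _)
      (Finset.mem_univ 0)
  have h3 := hs.1
  unfold seqLen
  omega

set_option maxHeartbeats 1000000 in
/-- If `|∑_{u ∈ ℛ} w_λ(u) − (ε/λ)²| ≤ cε` for all
`λ ∈ [ε/2, 3ε/2]`, with `4cε ≤ 1`, then there is a unique `λ* > 0` with
`∑_{u ∈ ℛ} w_{λ*}(u) = 1`, and it satisfies `|λ* − ε| ≤ cε²`. -/
theorem exists_unique_normalizing_lambda
    (w : (Σ k : ℕ, Fin (k + 1) → Fin 4 → ℕ) → ℝ) (hw : ∀ u, 0 ≤ w u)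
    (ε c : ℝ) (hε : 0 < ε) (hc : 0 < c) (hcε : 4 * c * ε ≤ 1)
    (h : ∀ lam ∈ Set.Icc (ε / 2) (3 * ε / 2),
      |(∑' u : Rset, Real.exp (-lam * seqLen u.1) * w u.1) - (ε / lam) ^ 2| ≤ c * ε) :
    (∃! lam : ℝ, 0 < lam ∧
      (∑' u : Rset, Real.exp (-lam * seqLen u.1) * w u.1) = 1) ∧
    ∀ lam : ℝ, 0 < lam →
      (∑' u : Rset, Real.exp (-lam * seqLen u.1) * w u.1) = 1 →
      |lam - ε| ≤ c * ε ^ 2 := by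
  have hterm : ∀ (lam : ℝ) (u : Rset), 0 ≤ Real.exp (-lam * seqLen u.1) * w u.1 :=
    fun lam u => mul_nonneg (Real.exp_pos _).le (hw _)
  set F : ℝ → ℝ := fun lam => ∑' u : Rset, Real.exp (-lam * seqLen u.1) * w u.1 with hFdef
  have hxpos : 0 < c * ε := mul_pos hc hε
  have hx4 : c * ε ≤ 1 / 4 := by nlinarith
  -- summability at ε/2
  have hsum_half : Summable fun u : Rset => Real.exp (-(ε / 2) * seqLen u.1) * w u.1 := by
    by_contra hns
    have h2 := h (ε / 2) ⟨le_rfl, by linarith⟩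
    rw [tsum_eq_zero_of_not_summable hns] at h2
    have h3 : (ε / (ε / 2)) ^ 2 = 4 := by
      rw [div_div_eq_mul_div, div_pow, mul_pow]
      rw [div_eq_iff (by positivity)]
      ring
    rw [h3] at h2
    rw [abs_of_nonpos (by norm_num)] at h2
    linarith
  have hsum_le : ∀ a b : ℝ, a ≤ b →
      Summable (fun u : Rset => Real.exp (-a * seqLen u.1) * w u.1) →
      Summable (fun u : Rset => Real.exp (-b * seqLen u.1) * w u.1) := by
    intro a b hab hs
    refine hs.of_nonneg_of_le (fun u => hterm b u) fun u => ?_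
    refine mul_le_mul_of_nonneg_right (Real.exp_le_exp.2 ?_) (hw _)
    have hn : (0:ℝ) ≤ (seqLen u.1 : ℝ) := Nat.cast_nonneg _
    nlinarith
  set lam₁ := ε - c * ε ^ 2 with hl1
  set lam₂ := ε + c * ε ^ 2 with hl2
  have hl1pos : 0 < lam₁ := by nlinarith
  have hl1mem : lam₁ ∈ Set.Icc (ε / 2) (3 * ε / 2) := ⟨by nlinarith, by nlinarith⟩
  have hl2mem : lam₂ ∈ Set.Icc (ε / 2) (3 * ε / 2) := ⟨by nlinarith, by nlinarith⟩
  have hsum1 : Summable (fun u : Rset => Real.exp (-lam₁ * seqLen u.1) * w u.1) :=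
    hsum_le _ _ hl1mem.1 hsum_half
  have hsum2 : Summable (fun u : Rset => Real.exp (-lam₂ * seqLen u.1) * w u.1) :=
    hsum_le _ _ hl2mem.1 hsum_half
  -- F lam₁ > 1
  have hF1 : 1 + c * ε ≤ F lam₁ := by
    have h1 := abs_le.1 (h lam₁ hl1mem)
    have hl1ne : lam₁ ≠ 0 := ne_of_gt hl1pos
    have ht : (ε / lam₁) * (1 - c * ε) = 1 := by
      rw [hl1, div_mul_eq_mul_div, div_eq_one_iff_eq (by rw [← hl1]; exact hl1ne)]; ring
    have htpos : 0 < ε / lam₁ := div_pos hε hl1pos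
    have hsq : (ε / lam₁) ^ 2 * (1 - c * ε) ^ 2 = 1 := by
      rw [← mul_pow, ht, one_pow]
    have h1x : 0 < 1 - c * ε := by linarith
    have ht2 : 1 + 2 * (c * ε) ≤ (ε / lam₁) ^ 2 := by
      nlinarith [hsq, mul_pos h1x h1x, sq_nonneg (c * ε), mul_pos hxpos hxpos]
    linarith [h1.1]
  have hF2 : F lam₂ ≤ 1 - (c * ε) / 4 := by
    have h1 := abs_le.1 (h lam₂ hl2mem)
    have hl2pos : 0 < lam₂ := by nlinarith
    have ht : (ε / lam₂) * (1 + c * ε) = 1 := by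
      rw [hl2]; field_simp
    have htpos : 0 < ε / lam₂ := div_pos hε hl2pos
    have htle : ε / lam₂ ≤ 1 := by nlinarith
    have hsq : (ε / lam₂) ^ 2 * (1 + c * ε) ^ 2 = 1 := by
      rw [← mul_pow, ht, one_pow]
    have h1x : 0 < 1 + c * ε := by linarith
    have ht2 : (ε / lam₂) ^ 2 ≤ 1 - 2 * (c * ε) + 3 * (c * ε) ^ 2 := by
      nlinarith [hsq, mul_pos h1x h1x, sq_nonneg (c * ε), mul_pos hxpos hxpos,
        sq_nonneg (ε / lam₂), mul_pos (mul_pos hxpos hxpos) hxpos]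
    nlinarith [h1.2]
  -- witness with positive weight
  have hwit : ∃ u : Rset, 0 < w u.1 := by
    by_contra hno
    push_neg at hno
    have hz : F lam₁ = 0 := by
      have : ∀ u : Rset, Real.exp (-lam₁ * seqLen u.1) * w u.1 = 0 := fun u => by
        rw [le_antisymm (hno u) (hw u.1), mul_zero]
      simp only [hFdef]
      rw [tsum_congr this, tsum_zero]
    linarith
  obtain ⟨u₀, hu₀⟩ := hwit
  -- strict monotonicity
  have hstrict : ∀ a b : ℝ, a < b →
      Summable (fun u : Rset => Real.exp (-a * seqLen u.1) * w u.1) →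
      F b < F a := by
    intro a b hab hsa
    have hsb := hsum_le a b hab.le hsa
    refine Summable.tsum_lt_tsum (i := u₀)
      (fun u => mul_le_mul_of_nonneg_right (Real.exp_le_exp.2 ?_) (hw _)) ?_ hsb hsa
    · have hn : (0:ℝ) ≤ (seqLen u.1 : ℝ) := Nat.cast_nonneg _
      nlinarith
    · refine mul_lt_mul_of_pos_right (Real.exp_lt_exp.2 ?_) hu₀
      have hn : (1:ℝ) ≤ (seqLen u₀.1 : ℝ) := by
        exact_mod_cast seqLen_pos_of_mem u₀.2
      nlinarith
  -- continuity via truncation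
  set G : ℝ → ℝ := fun lam => ∑' u : Rset, Real.exp (-(max lam lam₁) * seqLen u.1) * w u.1
    with hGdef
  have hGcont : Continuous G := by
    refine continuous_tsum (u := fun u : Rset => Real.exp (-lam₁ * seqLen u.1) * w u.1)
      (fun u => ?_) hsum1 (fun u x => ?_)
    · fun_prop
    · rw [Real.norm_eq_abs, abs_of_nonneg (hterm _ u)]
      refine mul_le_mul_of_nonneg_right (Real.exp_le_exp.2 ?_) (hw _)
      have hn : (0:ℝ) ≤ (seqLen u.1 : ℝ) := Nat.cast_nonneg _
      have hm : lam₁ ≤ max x lam₁ := le_max_right x lam₁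
      nlinarith
  have hGeq : ∀ lam, lam₁ ≤ lam → G lam = F lam := by
    intro lam hl
    simp only [hGdef, hFdef, max_eq_left hl]
  have hl12 : lam₁ ≤ lam₂ := by
    rw [hl1, hl2]; linarith [mul_pos hc (pow_pos hε 2)]
  have h1mem : (1 : ℝ) ∈ Set.Icc (G lam₂) (G lam₁) := by
    rw [Set.mem_Icc, hGeq lam₁ le_rfl, hGeq lam₂ hl12]
    exact ⟨by linarith, by linarith⟩
  obtain ⟨lamS, hlamSmem, hGlamS⟩ :=
    intermediate_value_Icc' hl12 hGcont.continuousOn h1mem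
  have hFlamS : F lamS = 1 := by rw [← hGeq lamS hlamSmem.1]; exact hGlamS
  have hlamSpos : 0 < lamS := lt_of_lt_of_le hl1pos hlamSmem.1
  -- summability from F lam = 1
  have hsum_of_one : ∀ lam : ℝ, F lam = 1 →
      Summable (fun u : Rset => Real.exp (-lam * seqLen u.1) * w u.1) := by
    intro lam hFl
    by_contra hns
    simp only [hFdef] at hFl
    rw [tsum_eq_zero_of_not_summable hns] at hFl
    norm_num at hFl
  -- bound
  have hbound : ∀ lam : ℝ, F lam = 1 → lam₁ ≤ lam ∧ lam ≤ lam₂ := by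
    intro lam hFl
    have hsl := hsum_of_one lam hFl
    constructor
    · by_contra hlt
      push_neg at hlt
      have := hstrict lam lam₁ hlt hsl
      linarith
    · by_contra hlt
      push_neg at hlt
      have := hstrict lam₂ lam hlt hsum2
      linarith
  refine ⟨⟨lamS, ⟨hlamSpos, hFlamS⟩, ?_⟩, ?_⟩
  · rintro y ⟨hy0, hy1⟩
    have hy1' : F y = 1 := hy1
    rcases lt_trichotomy y lamS with hlt | heq | hgt
    · have hc' := hstrict y lamS hlt (hsum_of_one y hy1')
      rw [hFlamS, hy1'] at hc'
      exact absurd hc' (lt_irrefl 1)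
    · exact heq
    · have hc' := hstrict lamS y hgt (hsum_of_one lamS hFlamS)
      rw [hFlamS, hy1'] at hc'
      exact absurd hc' (lt_irrefl 1)
  · intro lam hlam0 hlam1
    have hlam1' : F lam = 1 := hlam1
    obtain ⟨ha, hb⟩ := hbound lam hlam1'
    rw [hl1] at ha
    rw [hl2] at hb
    rw [abs_le]
    exact ⟨by linarith, by linarith⟩
end

section
/- For every real β > 1 there exists exactly one m > 0 satisfying the mean field equation m = tanh(β m), and this solution lies in the open interval (0, 1). -/
lemma my_hasDerivAt_tanh (x : ℝ) :
    HasDerivAt Real.tanh (1 / Real.cosh x ^ 2) x := by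
  have h : HasDerivAt (fun y => Real.sinh y / Real.cosh y)
      ((Real.cosh x * Real.cosh x - Real.sinh x * Real.sinh x) / Real.cosh x ^ 2) x :=
    (Real.hasDerivAt_sinh x).div (Real.hasDerivAt_cosh x) (Real.cosh_pos x).ne'
  have e : Real.cosh x * Real.cosh x - Real.sinh x * Real.sinh x = 1 := by
    have := Real.cosh_sq x; nlinarith
  rw [e] at h
  exact h.congr_of_eventuallyEq (by filter_upwards with y using (Real.tanh_eq_sinh_div_cosh y))

lemma my_hasDerivAt_tanh_mul (β x : ℝ) :
    HasDerivAt (fun y => Real.tanh (β * y)) (β / Real.cosh (β * x) ^ 2) x := by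
  have h := (my_hasDerivAt_tanh (β * x)).comp x ((hasDerivAt_id x).const_mul β)
  have h2 : HasDerivAt (fun y => Real.tanh (β * y)) (1 / Real.cosh (β * x) ^ 2 * (β * 1)) x := h
  simpa [div_eq_mul_inv, mul_comm] using h2

lemma my_tanh_lt_one (x : ℝ) : Real.tanh x < 1 := by
  rw [Real.tanh_eq_sinh_div_cosh]
  exact (div_lt_one (Real.cosh_pos x)).mpr (Real.sinh_lt_cosh x)

lemma my_tanh_cont (β : ℝ) : Continuous (fun y : ℝ => Real.tanh (β * y)) :=
  continuous_iff_continuousAt.mpr fun x => (my_hasDerivAt_tanh_mul β x).continuousAt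

/-- MVT for `x ↦ tanh (β x)`. -/
lemma my_mvt (β a b : ℝ) (hab : a < b) :
    ∃ c ∈ Set.Ioo a b,
      Real.tanh (β * b) - Real.tanh (β * a) = (β / Real.cosh (β * c) ^ 2) * (b - a) := by
  obtain ⟨c, hc, hc'⟩ := exists_hasDerivAt_eq_slope (fun y => Real.tanh (β * y))
    (fun y => β / Real.cosh (β * y) ^ 2) hab
    ((my_tanh_cont β).continuousOn)
    (fun y _ => my_hasDerivAt_tanh_mul β y)
  refine ⟨c, hc, ?_⟩
  rw [hc', div_mul_cancel₀ _ (sub_ne_zero.mpr hab.ne')]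

/-- For every `β > 1` there is exactly one `m > 0` with
`m = tanh(β m)`, and any such solution lies in `(0, 1)`. -/
theorem mean_field_equation_unique_positive_solution
    (β : ℝ) (hβ : 1 < β) :
    (∃! m : ℝ, 0 < m ∧ m = Real.tanh (β * m)) ∧
    ∀ m : ℝ, 0 < m → m = Real.tanh (β * m) → m ∈ Set.Ioo (0 : ℝ) 1 := by
  have hβ0 : 0 < β := lt_trans one_pos hβ
  -- key uniqueness fact: no two distinct positive solutions
  have key : ∀ a b : ℝ, 0 < a → a < b → a = Real.tanh (β * a) →
      b = Real.tanh (β * b) → False := by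
    intro a b ha hab hae hbe
    obtain ⟨c₁, hc₁, he₁⟩ := my_mvt β 0 a ha
    obtain ⟨c₂, hc₂, he₂⟩ := my_mvt β a b hab
    have hc₂0 : 0 < c₂ := lt_trans ha hc₂.1
    have hcosh₁ : Real.cosh (β * c₁) < Real.cosh (β * c₂) := by
      rw [Real.cosh_lt_cosh, abs_of_pos (mul_pos hβ0 hc₁.1),
        abs_of_pos (mul_pos hβ0 hc₂0)]
      have h2 : c₁ < c₂ := lt_trans hc₁.2 hc₂.1
      nlinarith
    have hp₁ : (0:ℝ) < Real.cosh (β * c₁) ^ 2 := by positivity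
    have hp₂ : (0:ℝ) < Real.cosh (β * c₂) ^ 2 := by positivity
    rw [mul_zero, Real.tanh_zero, sub_zero, sub_zero, ← hae] at he₁
    have hg₁ : β / Real.cosh (β * c₁) ^ 2 = 1 :=
      mul_right_cancel₀ (ne_of_gt ha) (by linarith)
    rw [← hbe, ← hae] at he₂
    have hg₂ : β / Real.cosh (β * c₂) ^ 2 = 1 :=
      mul_right_cancel₀ (sub_ne_zero.mpr (ne_of_gt hab)) (by linarith)
    have hsq : Real.cosh (β * c₁) ^ 2 < Real.cosh (β * c₂) ^ 2 := by
      nlinarith [Real.cosh_pos (β * c₁)]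
    have : β / Real.cosh (β * c₂) ^ 2 < β / Real.cosh (β * c₁) ^ 2 :=
      div_lt_div_of_pos_left hβ0 hp₁ hsq
    rw [hg₁, hg₂] at this
    exact lt_irrefl 1 this
  constructor
  · -- existence
    have hg0 : ContinuousAt (fun x : ℝ => β / Real.cosh (β * x) ^ 2) 0 := by
      apply ContinuousAt.div continuousAt_const
      · exact ((Real.continuous_cosh.comp (continuous_const.mul continuous_id)).pow 2).continuousAt
      · positivity
    have hval : (fun x : ℝ => β / Real.cosh (β * x) ^ 2) 0 = β := by norm_num
    have hg0' : Filter.Tendsto (fun x : ℝ => β / Real.cosh (β * x) ^ 2)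
        (nhds 0) (nhds β) := by
      have := hg0.tendsto
      rwa [show β / Real.cosh (β * 0) ^ 2 = β by norm_num] at this
    have hev : ∀ᶠ x in nhds (0:ℝ), 1 < β / Real.cosh (β * x) ^ 2 :=
      hg0'.eventually (eventually_gt_nhds hβ)
    obtain ⟨δ, hδ, hδ'⟩ := Metric.eventually_nhds_iff.mp hev
    set ε : ℝ := min (δ / 2) (1 / 2) with hε
    have hε0 : 0 < ε := lt_min (by linarith) (by norm_num)
    have hε1 : ε < 1 := lt_of_le_of_lt (min_le_right _ _) (by norm_num)
    have hεδ : ε < δ := lt_of_le_of_lt (min_le_left _ _) (by linarith)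
    have htε : ε < Real.tanh (β * ε) := by
      obtain ⟨c, hc, he⟩ := my_mvt β 0 ε hε0
      rw [mul_zero, Real.tanh_zero, sub_zero, sub_zero] at he
      have hgc : 1 < β / Real.cosh (β * c) ^ 2 := by
        apply hδ'
        rw [Real.dist_eq, sub_zero, abs_of_pos hc.1]
        exact lt_trans hc.2 hεδ
      nlinarith [he, hgc, hε0]
    have hk : ContinuousOn (fun x => Real.tanh (β * x) - x) (Set.Icc ε 1) :=
      ((my_tanh_cont β).sub continuous_id).continuousOn
    have hsub : Set.Ioo ((fun x => Real.tanh (β * x) - x) 1)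
        ((fun x => Real.tanh (β * x) - x) ε) ⊆
        (fun x => Real.tanh (β * x) - x) '' Set.Ioo ε 1 :=
      intermediate_value_Ioo' (le_of_lt hε1) hk
    have h0mem : (0:ℝ) ∈ Set.Ioo ((fun x => Real.tanh (β * x) - x) 1)
        ((fun x => Real.tanh (β * x) - x) ε) := by
      constructor
      · simp only [mul_one]
        linarith [my_tanh_lt_one β]
      · simpa using sub_pos.mpr htε
    obtain ⟨m, hm, hme⟩ := hsub h0mem
    have hm0 : 0 < m := lt_trans hε0 hm.1
    have hmeq : m = Real.tanh (β * m) := by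
      have h : Real.tanh (β * m) - m = 0 := hme
      linarith
    refine ⟨m, ⟨hm0, hmeq⟩, ?_⟩
    rintro y ⟨hy0, hye⟩
    rcases lt_trichotomy y m with h | h | h
    · exact (key y m hy0 h hye hmeq).elim
    · exact h
    · exact (key m y hm0 h hmeq hye).elim
  · intro m hm0 hme
    exact ⟨hm0, by rw [hme]; exact my_tanh_lt_one _⟩
end

section
/- Let β > 1 and let m_β ∈ (0,1) be the unique positive solution of m = tanh(β m). Then f_β is an even function on [−1, 1], and for every m ∈ [−1, 1] one has f_β(m) ≥ f_β(m_β), with equality if and only if m = m_β or m = −m_β; that is, f_β is a symmetric two-well function whose minimizers are exactly ±m_β. -/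
/-- The entropy `S(m) = −((1−m)/2) log((1−m)/2) − ((1+m)/2) log((1+m)/2)`; note that
`Real.log 0 = 0` in Mathlib, which implements the convention `0 · log 0 = 0`. -/
noncomputable def entropyS (m : ℝ) : ℝ :=
  -((1 - m) / 2) * Real.log ((1 - m) / 2) - ((1 + m) / 2) * Real.log ((1 + m) / 2)

/-- The mean field free energy `f_β(m) = −m²/2 − S(m)/β`. -/
noncomputable def meanFieldFreeEnergy (β m : ℝ) : ℝ :=
  -m ^ 2 / 2 - entropyS m / β

/-- Auxiliary function: `2β` times the derivative of the free energy on `(-1,1)`. -/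
noncomputable def auxH (β x : ℝ) : ℝ :=
  Real.log (1 + x) - Real.log (1 - x) - 2 * β * x

lemma auxH_hasDerivAt (β : ℝ) {x : ℝ} (hx : x ∈ Set.Ioo (-1 : ℝ) 1) :
    HasDerivAt (auxH β) (1 / (1 + x) - -(1 / (1 - x)) - 2 * β) x := by
  have h1 : (0:ℝ) < 1 + x := by linarith [hx.1]
  have h2 : (0:ℝ) < 1 - x := by linarith [hx.2]
  have d1 : HasDerivAt (fun m : ℝ => Real.log (1 + m)) (1 / (1 + x)) x := by
    have := (Real.hasDerivAt_log h1.ne').comp x ((hasDerivAt_id x).const_add 1)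
    exact this.congr_deriv (by simp)
  have d2 : HasDerivAt (fun m : ℝ => Real.log (1 - m)) (-(1 / (1 - x))) x := by
    have := (Real.hasDerivAt_log h2.ne').comp x ((hasDerivAt_id x).const_sub 1)
    refine this.congr_deriv ?_
    ring
  have d3 : HasDerivAt (fun m : ℝ => 2 * β * m) (2 * β) x := by
    simpa using (hasDerivAt_id x).const_mul (2 * β)
  exact (d1.sub d2).sub d3

lemma auxH_strictConvexOn (β : ℝ) :
    StrictConvexOn ℝ (Set.Ico (0:ℝ) 1) (auxH β) := by
  apply StrictMonoOn.strictConvexOn_of_deriv (convex_Ico 0 1)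
  · intro x hx
    have hx' : x ∈ Set.Ioo (-1 : ℝ) 1 := ⟨by linarith [hx.1], hx.2⟩
    exact (auxH_hasDerivAt β hx').continuousAt.continuousWithinAt
  · rw [interior_Ico]
    intro a ha b hb hab
    have ha' : a ∈ Set.Ioo (-1 : ℝ) 1 := ⟨by linarith [ha.1], ha.2⟩
    have hb' : b ∈ Set.Ioo (-1 : ℝ) 1 := ⟨by linarith [hb.1], hb.2⟩
    rw [(auxH_hasDerivAt β ha').deriv, (auxH_hasDerivAt β hb').deriv]
    have ea : 1 / (1 + a) - -(1 / (1 - a)) = 2 / (1 - a ^ 2) := by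
      have h1 : (0:ℝ) < 1 + a := by linarith [ha.1]
      have h2 : (0:ℝ) < 1 - a := by linarith [ha.2]
      have h3 : (0:ℝ) < 1 - a ^ 2 := by nlinarith
      field_simp
      ring
    have eb : 1 / (1 + b) - -(1 / (1 - b)) = 2 / (1 - b ^ 2) := by
      have h1 : (0:ℝ) < 1 + b := by linarith [hb.1]
      have h2 : (0:ℝ) < 1 - b := by linarith [hb.2]
      have h3 : (0:ℝ) < 1 - b ^ 2 := by nlinarith
      field_simp
      ring
    have key : 2 / (1 - a ^ 2) < 2 / (1 - b ^ 2) := by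
      apply div_lt_div_of_pos_left two_pos
      · nlinarith [hb.1, hb.2]
      · nlinarith [ha.1, ha.2, hb.1, hb.2]
    linarith [ea, eb]

lemma freeEnergy_hasDerivAt {β : ℝ} (hβ0 : 0 < β) {x : ℝ} (hx : x ∈ Set.Ioo (-1 : ℝ) 1) :
    HasDerivAt (meanFieldFreeEnergy β) (auxH β x / (2 * β)) x := by
  have hx1 : (0:ℝ) < 1 - x := by linarith [hx.2]
  have hx2 : (0:ℝ) < 1 + x := by linarith [hx.1]
  have hu : HasDerivAt (fun m : ℝ => (1 - m) / 2) (-(1 / 2)) x := by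
    have := ((hasDerivAt_id x).const_sub 1).div_const 2
    refine this.congr_deriv ?_
    norm_num
  have hv : HasDerivAt (fun m : ℝ => (1 + m) / 2) (1 / 2) x := by
    simpa using ((hasDerivAt_id x).const_add 1).div_const 2
  have hU : HasDerivAt (fun m : ℝ => ((1 - m) / 2) * Real.log ((1 - m) / 2))
      ((Real.log ((1 - x) / 2) + 1) * -(1 / 2)) x :=
    by have := (Real.hasDerivAt_mul_log (by positivity : (0:ℝ) < (1 - x) / 2).ne').comp x hu; exact this
  have hV : HasDerivAt (fun m : ℝ => ((1 + m) / 2) * Real.log ((1 + m) / 2))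
      ((Real.log ((1 + x) / 2) + 1) * (1 / 2)) x :=
    by have := (Real.hasDerivAt_mul_log (by positivity : (0:ℝ) < (1 + x) / 2).ne').comp x hv; exact this
  have hS : HasDerivAt entropyS
      (-((Real.log ((1 - x) / 2) + 1) * -(1 / 2)) - (Real.log ((1 + x) / 2) + 1) * (1 / 2)) x := by
    have hE : entropyS = fun m =>
        -(((1 - m) / 2) * Real.log ((1 - m) / 2)) - ((1 + m) / 2) * Real.log ((1 + m) / 2) := by
      funext m; unfold entropyS; ring
    rw [hE]
    exact hU.neg.sub hV
  have hq : HasDerivAt (fun m : ℝ => -m ^ 2 / 2) (-x) x := by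
    have := (hasDerivAt_pow 2 x).neg.div_const 2
    refine this.congr_deriv ?_
    norm_num
    ring
  have hF : HasDerivAt (meanFieldFreeEnergy β)
      (-x - (-((Real.log ((1 - x) / 2) + 1) * -(1 / 2)) -
        (Real.log ((1 + x) / 2) + 1) * (1 / 2)) / β) x := hq.sub (hS.div_const β)
  convert hF using 1
  unfold auxH
  rw [Real.log_div hx1.ne' two_ne_zero, Real.log_div hx2.ne' two_ne_zero]
  field_simp
  ring

lemma freeEnergy_continuous (β : ℝ) : Continuous (meanFieldFreeEnergy β) := by
  have c1 : Continuous fun m : ℝ => ((1 - m) / 2) * Real.log ((1 - m) / 2) :=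
    Real.continuous_mul_log.comp (by continuity)
  have c2 : Continuous fun m : ℝ => ((1 + m) / 2) * Real.log ((1 + m) / 2) :=
    Real.continuous_mul_log.comp (by continuity)
  have hE : meanFieldFreeEnergy β = fun m =>
      -m ^ 2 / 2 - (-(((1 - m) / 2) * Real.log ((1 - m) / 2)) -
        ((1 + m) / 2) * Real.log ((1 + m) / 2)) / β := by
    funext m; unfold meanFieldFreeEnergy entropyS; ring
  rw [hE]
  exact ((continuous_pow 2).neg.div_const 2).sub ((c1.neg.sub c2).div_const β)

lemma freeEnergy_even (β m : ℝ) : meanFieldFreeEnergy β (-m) = meanFieldFreeEnergy β m := by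
  unfold meanFieldFreeEnergy entropyS
  ring_nf

/-- For `β > 1` and `m_β ∈ (0,1)` the unique positive solution of
`m = tanh(β m)`, the free energy `f_β` is even on `[−1,1]` and attains its minimum
over `[−1,1]` exactly at `m_β` and `−m_β`. -/
theorem mean_field_free_energy_two_wells
    (β : ℝ) (hβ : 1 < β) (mβ : ℝ) (hmem : mβ ∈ Set.Ioo (0 : ℝ) 1)
    (hfix : mβ = Real.tanh (β * mβ)) :
    (∀ m ∈ Set.Icc (-1 : ℝ) 1, meanFieldFreeEnergy β (-m) = meanFieldFreeEnergy β m) ∧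
    (∀ m ∈ Set.Icc (-1 : ℝ) 1, meanFieldFreeEnergy β mβ ≤ meanFieldFreeEnergy β m) ∧
    (∀ m ∈ Set.Icc (-1 : ℝ) 1,
      (meanFieldFreeEnergy β m = meanFieldFreeEnergy β mβ ↔ m = mβ ∨ m = -mβ)) := by
  obtain ⟨hm0, hm1⟩ := hmem
  have hβ0 : (0:ℝ) < β := lt_trans one_pos hβ
  -- value of auxH at 0 and at mβ
  have hH0 : auxH β 0 = 0 := by simp [auxH]
  have hHmβ : auxH β mβ = 0 := by
    have hlog : Real.log (1 + Real.tanh (β * mβ)) - Real.log (1 - Real.tanh (β * mβ))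
        = 2 * (β * mβ) := by
      set t := β * mβ
      have hc := Real.cosh_pos t
      have h1 : 1 + Real.tanh t = Real.exp t / Real.cosh t := by
        rw [Real.tanh_eq_sinh_div_cosh]; field_simp; exact Real.cosh_add_sinh t
      have h2 : 1 - Real.tanh t = Real.exp (-t) / Real.cosh t := by
        rw [Real.tanh_eq_sinh_div_cosh]; field_simp; exact Real.cosh_sub_sinh t
      rw [h1, h2, Real.log_div (Real.exp_ne_zero _) hc.ne',
        Real.log_div (Real.exp_ne_zero _) hc.ne', Real.log_exp, Real.log_exp]
      ring
    unfold auxH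
    rw [show (1:ℝ) + mβ = 1 + Real.tanh (β * mβ) from by rw [← hfix],
      show (1:ℝ) - mβ = 1 - Real.tanh (β * mβ) from by rw [← hfix]]
    linarith [hlog]
  -- sign of auxH via strict convexity
  have hconv := auxH_strictConvexOn β
  have h0mem : (0:ℝ) ∈ Set.Ico (0:ℝ) 1 := ⟨le_refl 0, one_pos⟩
  have hmmem : mβ ∈ Set.Ico (0:ℝ) 1 := ⟨hm0.le, hm1⟩
  have hneg : ∀ x ∈ Set.Ioo (0:ℝ) mβ, auxH β x < 0 := by
    intro x hx
    have hb0 : 0 < x / mβ := div_pos hx.1 hm0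
    have hb1 : x / mβ < 1 := (div_lt_one hm0).2 hx.2
    have hcomb := hconv.2 h0mem hmmem (ne_of_lt hm0) (by linarith : (0:ℝ) < 1 - x / mβ) hb0
      (by ring : (1 - x / mβ) + x / mβ = 1)
    have hx' : (1 - x / mβ) • (0:ℝ) + (x / mβ) • mβ = x := by
      simp only [smul_eq_mul, mul_zero, zero_add]
      field_simp
    rw [hx'] at hcomb
    rw [hH0, hHmβ] at hcomb
    simpa using hcomb
  have hpos : ∀ x ∈ Set.Ioo mβ 1, 0 < auxH β x := by
    intro x hx
    have hxmem : x ∈ Set.Ico (0:ℝ) 1 := ⟨by linarith [hx.1], hx.2⟩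
    have hb0 : 0 < mβ / x := div_pos hm0 (by linarith [hx.1])
    have hb1 : mβ / x < 1 := (div_lt_one (by linarith [hx.1])).2 hx.1
    have hcomb := hconv.2 h0mem hxmem (by linarith [hx.1] : (0:ℝ) ≠ x)
      (by linarith : (0:ℝ) < 1 - mβ / x) hb0 (by ring : (1 - mβ / x) + mβ / x = 1)
    have hx' : (1 - mβ / x) • (0:ℝ) + (mβ / x) • x = mβ := by
      have hxne : x ≠ 0 := ne_of_gt (by linarith [hx.1])
      simp only [smul_eq_mul, mul_zero, zero_add]
      field_simp
    rw [hx', hHmβ, hH0] at hcomb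
    simp only [smul_eq_mul, mul_zero, zero_add] at hcomb
    by_contra hle
    push_neg at hle
    nlinarith [hcomb, mul_nonpos_of_nonneg_of_nonpos hb0.le hle]
  -- monotonicity of the free energy
  have hanti : StrictAntiOn (meanFieldFreeEnergy β) (Set.Icc 0 mβ) := by
    apply strictAntiOn_of_deriv_neg (convex_Icc 0 mβ) (freeEnergy_continuous β).continuousOn
    intro x hx
    rw [interior_Icc] at hx
    have hx' : x ∈ Set.Ioo (-1 : ℝ) 1 := ⟨by linarith [hx.1], by linarith [hx.2]⟩
    rw [(freeEnergy_hasDerivAt hβ0 hx').deriv]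
    exact div_neg_of_neg_of_pos (hneg x hx) (by linarith)
  have hmono : StrictMonoOn (meanFieldFreeEnergy β) (Set.Icc mβ 1) := by
    apply strictMonoOn_of_deriv_pos (convex_Icc mβ 1) (freeEnergy_continuous β).continuousOn
    intro x hx
    rw [interior_Icc] at hx
    have hx' : x ∈ Set.Ioo (-1 : ℝ) 1 := ⟨by linarith [hx.1], hx.2⟩
    rw [(freeEnergy_hasDerivAt hβ0 hx').deriv]
    exact div_pos (hpos x hx) (by linarith)
  -- key statement on [0,1]
  have hkey : ∀ m ∈ Set.Icc (0:ℝ) 1,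
      meanFieldFreeEnergy β mβ ≤ meanFieldFreeEnergy β m ∧
        (meanFieldFreeEnergy β m = meanFieldFreeEnergy β mβ → m = mβ) := by
    intro m hm
    rcases lt_trichotomy m mβ with hlt | heq | hgt
    · have h := hanti ⟨hm.1, hlt.le⟩ ⟨hm0.le, le_refl mβ⟩ hlt
      exact ⟨h.le, fun he => absurd he (by linarith)⟩
    · exact ⟨by rw [heq], fun _ => heq⟩
    · have h := hmono ⟨le_refl mβ, hm1.le⟩ ⟨hgt.le, hm.2⟩ hgt
      exact ⟨h.le, fun he => absurd he (by linarith)⟩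
  refine ⟨fun m _ => freeEnergy_even β m, fun m hm => ?_, fun m hm => ?_⟩
  · rcases le_or_gt 0 m with h0 | h0
    · exact (hkey m ⟨h0, hm.2⟩).1
    · have h := (hkey (-m) ⟨by linarith, by linarith [hm.1]⟩).1
      rw [freeEnergy_even β m] at h
      exact h
  · constructor
    · intro he
      rcases le_or_gt 0 m with h0 | h0
      · exact Or.inl ((hkey m ⟨h0, hm.2⟩).2 he)
      · refine Or.inr ?_
        have he' : meanFieldFreeEnergy β (-m) = meanFieldFreeEnergy β mβ := by
          rw [freeEnergy_even β m]; exact he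
        have := (hkey (-m) ⟨by linarith, by linarith [hm.1]⟩).2 he'
        linarith
    · rintro (rfl | rfl)
      · rfl
      · exact freeEnergy_even β mβ
end
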